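/- arXiv:2101.08322 — 5 statements merged into one kernel-verified Lean document; each statement's English description precedes it below -/
import Mathlib

section
/- Let a ∈ ℂ with |a| = 1, Re(a) > 0, and let n ≥ 1 be an integer. Then the limit as ε → 0⁺ of [ ∫_ε^∞ dr/(r (r+a)^n) + (log ε)/a^n ] exists and equals (1/a^n)(Log a − ∑_{j=1}^{n−1} 1/j), where Log denotes the principal branch of the logarithm. -/
lemma pf_decomp (a r : ℂ) (ha : a ≠ 0) (hr : r ≠ 0) (hra : r + a ≠ 0) :
    ∀ n : ℕ, 1 / (r * (r + a) ^ n) =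
      1 / (a ^ n * r) - ∑ k ∈ Finset.range n, 1 / (a ^ (n - k) * (r + a) ^ (k + 1)) := by
  intro n
  induction n with
  | zero => simp
  | succ n ih =>
    rw [Finset.sum_range_succ']
    have key : 1 / (r * (r + a) ^ (n + 1)) = (1 / (r + a)) * (1 / (r * (r + a) ^ n)) := by
      rw [pow_succ]; field_simp
    rw [key, ih, mul_sub, Finset.mul_sum]
    have h1 : ∀ k, n + 1 - (k + 1) = n - k := fun k => by omega
    simp only [h1, Nat.sub_zero, pow_zero, one_mul]
    have h2 : ∀ k ∈ Finset.range n, (1 : ℂ) / (r + a) * (1 / (a ^ (n - k) * (r + a) ^ (k + 1)))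
        = 1 / (a ^ (n - k) * (r + a) ^ (k + 1 + 1)) := by
      intro k _
      have : (a : ℂ) ^ (n - k) ≠ 0 := pow_ne_zero _ ha
      field_simp; ring
    rw [Finset.sum_congr rfl h2]
    have hpow : (a : ℂ) ^ n ≠ 0 := pow_ne_zero _ ha
    have h3 : (1 : ℂ) / (r + a) * (1 / (a ^ n * r))
        = 1 / (a ^ (n + 1) * r) - 1 / (a ^ (n + 1) * (r + a)) := by
      rw [pow_succ]; field_simp; ring
    rw [h3]; ring

lemma deriv_val (a z : ℂ) (ha : a ≠ 0) (hz : z ≠ 0) (hza : z + a ≠ 0) (n : ℕ) (hn : 1 ≤ n) :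
    (1 / a ^ n) * (z⁻¹ - (z + a)⁻¹) +
      ∑ m ∈ Finset.Icc 1 (n - 1),
        (1 / ((m : ℂ) * a ^ (n - m))) * (-(m : ℂ) * (((z + a) ^ (m + 1))⁻¹))
    = 1 / (z * (z + a) ^ n) := by
  rw [pf_decomp a z ha hz hza n]
  have hIcc : Finset.Icc 1 (n - 1) = Finset.Ico 1 n := by
    rw [← Finset.Ico_add_one_right_eq_Icc]; congr 1; omega
  rw [hIcc, Finset.sum_Ico_eq_sum_range]
  obtain ⟨p, rfl⟩ : ∃ p, n = p + 1 := ⟨n - 1, by omega⟩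
  rw [Finset.sum_range_succ']
  simp only [Nat.add_sub_cancel, Nat.sub_zero, pow_zero, one_mul, pow_one]
  have h2 : ∀ i ∈ Finset.range p,
      (1 / (((1 + i : ℕ) : ℂ) * a ^ (p + 1 - (1 + i)))) *
        (-((1 + i : ℕ) : ℂ) * (((z + a) ^ ((1 + i) + 1))⁻¹))
      = -(1 / (a ^ (p - i) * (z + a) ^ (i + 1 + 1))) := by
    intro i _
    have hm : ((1 + i : ℕ) : ℂ) ≠ 0 := by
      exact_mod_cast (Nat.cast_ne_zero (R := ℂ)).mpr (by omega)
    have he : p + 1 - (1 + i) = p - i := by omega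
    have he2 : (1 + i) + 1 = i + 1 + 1 := by omega
    rw [he, he2]
    have hb : (a : ℂ) ^ (p - i) ≠ 0 := pow_ne_zero _ ha
    have hc : (z + a) ^ (i + 1 + 1) ≠ 0 := pow_ne_zero _ hza
    rw [div_mul_eq_mul_div, one_mul, div_eq_iff (mul_ne_zero hm hb)]
    field_simp
  rw [Finset.sum_congr rfl h2, Finset.sum_neg_distrib]
  have h4 : ∀ i ∈ Finset.range p,
      (1 : ℂ) / (a ^ (p + 1 - (i + 1)) * (z + a) ^ (i + 1 + 1))
      = 1 / (a ^ (p - i) * (z + a) ^ (i + 1 + 1)) := by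
    intro i _
    congr 3
    omega
  rw [Finset.sum_congr rfl h4]
  have h3 : (1 / a ^ (p + 1)) * (z⁻¹ - (z + a)⁻¹)
      = 1 / (a ^ (p + 1) * z) - 1 / (a ^ (p + 1) * (z + a)) := by
    have hpow : (a : ℂ) ^ (p + 1) ≠ 0 := pow_ne_zero _ ha
    field_simp
  rw [h3]; ring

open MeasureTheory Filter

/-- The regularized limit computing the Heisenberg group relative fundamental
solution: for unimodular `a` with positive real part,
`lim_{ε→0⁺} [∫_ε^∞ dr/(r (r+a)^n) + (log ε)/a^n] = (Log a - ∑_{j=1}^{n-1} 1/j)/a^n`. -/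
theorem heisenberg_log_limit (n : ℕ) (hn : 1 ≤ n) (a : ℂ)
    (ha1 : ‖a‖ = 1) (ha2 : 0 < a.re) :
    Tendsto
      (fun ε : ℝ =>
        (∫ r in Set.Ioi ε, 1 / ((r : ℂ) * ((r : ℂ) + a) ^ n)) +
          (Real.log ε : ℂ) / a ^ n)
      (nhdsWithin 0 (Set.Ioi 0))
      (nhds ((1 / a ^ n) *
        (Complex.log a - ∑ j ∈ Finset.Icc 1 (n - 1), 1 / (j : ℂ)))) := by
  have ha0 : a ≠ 0 := fun h => by simp [h] at ha2
  have hwne : ∀ x : ℝ, 0 ≤ x → (x : ℂ) + a ≠ 0 := by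
    intro x hx h
    have h2 : ((x : ℂ) + a).re = x + a.re := by simp
    rw [h] at h2
    simp at h2
    linarith
  have hwslit : ∀ x : ℝ, 0 ≤ x → (x : ℂ) + a ∈ Complex.slitPlane := by
    intro x hx
    rw [Complex.mem_slitPlane_iff]
    left; simp; linarith
  set F : ℝ → ℂ := fun x =>
    (1 / a ^ n) * (Complex.log x - Complex.log ((x : ℂ) + a)) +
      ∑ m ∈ Finset.Icc 1 (n - 1),
        (1 / ((m : ℂ) * a ^ (n - m))) * (((x : ℂ) + a) ^ m)⁻¹ with hF
  have hderiv : ∀ x : ℝ, 0 < x →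
      HasDerivAt F (1 / ((x : ℂ) * ((x : ℂ) + a) ^ n)) x := by
    intro x hx
    have hxne : (x : ℂ) ≠ 0 := by exact_mod_cast Complex.ofReal_ne_zero.mpr hx.ne'
    have hxa : (x : ℂ) + a ≠ 0 := hwne x hx.le
    have h1 : HasDerivAt (fun y : ℝ => Complex.log y) ((x : ℂ))⁻¹ x := by
      have := Complex.hasDerivAt_log (z := (x : ℂ)) (by
        rw [Complex.mem_slitPlane_iff]; left; simpa using hx)
      exact this.comp_ofReal
    have h2 : HasDerivAt (fun y : ℝ => Complex.log ((y : ℂ) + a)) (((x : ℂ) + a))⁻¹ x := by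
      have hout := Complex.hasDerivAt_log (hwslit x hx.le)
      have hin : HasDerivAt (fun z : ℂ => z + a) 1 (x : ℂ) := (hasDerivAt_id _).add_const a
      have hcomp := hout.comp (x : ℂ) hin
      simpa [Function.comp_def] using hcomp.comp_ofReal
    have h3 : ∀ m ∈ Finset.Icc 1 (n - 1),
        HasDerivAt (fun y : ℝ => (1 / ((m : ℂ) * a ^ (n - m))) * (((y : ℂ) + a) ^ m)⁻¹)
          ((1 / ((m : ℂ) * a ^ (n - m))) * (-(m : ℂ) * (((x : ℂ) + a) ^ (m + 1))⁻¹)) x := by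
      intro m hm
      have hcomp := (hasDerivAt_zpow (-(m : ℤ)) ((x : ℂ) + a) (Or.inl hxa)).comp
        (x : ℂ) ((hasDerivAt_id _).add_const a)
      have hzp : HasDerivAt (fun z : ℂ => ((z + a) ^ m)⁻¹)
          (-(m : ℂ) * (((x : ℂ) + a) ^ (m + 1))⁻¹) (x : ℂ) := by
        have hfeq : ((fun z : ℂ => z ^ (-(m : ℤ))) ∘ fun z : ℂ => id z + a)
            = (fun z : ℂ => ((z + a) ^ m)⁻¹) := by
          funext w; simp [Function.comp_def, zpow_neg, zpow_natCast]
        have hdeq : -(m : ℂ) * (((x : ℂ) + a) ^ (m + 1))⁻¹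
            = ((-(m : ℤ) : ℤ) : ℂ) * ((x : ℂ) + a) ^ ((-(m : ℤ)) - 1) * 1 := by
          rw [mul_one]
          have h5 : (-(m : ℤ)) - 1 = -((m + 1 : ℕ) : ℤ) := by push_cast; ring
          rw [h5, zpow_neg, zpow_natCast]
          push_cast; ring
        rw [hfeq] at hcomp
        exact hcomp.congr_deriv hdeq.symm
      exact (hzp.comp_ofReal).const_mul (1 / ((m : ℂ) * a ^ (n - m)))
    have hsum := HasDerivAt.sum h3
    have hlog := ((h1.sub h2).const_mul (1 / a ^ n))
    have hall := hlog.add hsum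
    rw [← deriv_val a (x : ℂ) ha0 hxne hxa n hn]
    exact hall.congr_of_eventuallyEq (Filter.Eventually.of_forall fun y => by
      simp [hF, Finset.sum_apply])
  have htop : Tendsto F atTop (nhds 0) := by
    have hnorm : Tendsto (fun x : ℝ => ‖(x : ℂ) + a‖) atTop atTop := by
      apply tendsto_atTop_mono (fun x => ?_) tendsto_id
      calc (x : ℝ) = (x : ℝ) + 0 := by ring
      _ ≤ x + a.re := by linarith
      _ = ((x : ℂ) + a).re := by simp
      _ ≤ ‖(x : ℂ) + a‖ := Complex.re_le_norm _
    have hsum0 : Tendsto (fun x : ℝ =>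
        ∑ m ∈ Finset.Icc 1 (n - 1),
          (1 / ((m : ℂ) * a ^ (n - m))) * (((x : ℂ) + a) ^ m)⁻¹) atTop (nhds 0) := by
      have h0 : (0 : ℂ) = ∑ m ∈ Finset.Icc 1 (n - 1), (0 : ℂ) := by simp
      rw [h0]
      apply tendsto_finset_sum
      intro m hm
      have hm1 : 1 ≤ m := (Finset.mem_Icc.mp hm).1
      have hterm : Tendsto (fun x : ℝ => (((x : ℂ) + a) ^ m)⁻¹) atTop (nhds 0) := by
        rw [tendsto_zero_iff_norm_tendsto_zero]
        have hp : Tendsto (fun x : ℝ => (‖(x : ℂ) + a‖) ^ m) atTop atTop :=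
          (tendsto_pow_atTop (by omega)).comp hnorm
        have := hp.inv_tendsto_atTop
        convert this using 2 with x
        simp [norm_inv, norm_pow]
      simpa using hterm.const_mul (1 / ((m : ℂ) * a ^ (n - m)))
    have hlog0 : Tendsto (fun x : ℝ => Complex.log x - Complex.log ((x : ℂ) + a))
        atTop (nhds 0) := by
      have hev : ∀ᶠ x : ℝ in atTop,
          Complex.log x - Complex.log ((x : ℂ) + a) = -Complex.log (1 + a / x) := by
        filter_upwards [eventually_gt_atTop 0] with x hx
        have hxne : (x : ℂ) ≠ 0 := by exact_mod_cast Complex.ofReal_ne_zero.mpr hx.ne'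
        have h1ne : (1 : ℂ) + a / x ≠ 0 := by
          intro h
          have hd : a / (x : ℂ) = -1 := by linear_combination h
          field_simp at hd
          have : a.re = -x := by rw [hd]; simp
          linarith
        have hfac : (x : ℂ) + a = (x : ℝ) * ((1 : ℂ) + a / x) := by
          push_cast; field_simp
        rw [hfac, Complex.log_ofReal_mul hx h1ne, ← Complex.ofReal_log hx.le]
        ring
      rw [tendsto_congr' hev]
      have h1 : Tendsto (fun x : ℝ => (1 : ℂ) + a / x) atTop (nhds 1) := by
        have hinv : Tendsto (fun x : ℝ => ((x : ℂ))⁻¹) atTop (nhds 0) := by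
          rw [tendsto_zero_iff_norm_tendsto_zero]
          have h2 : Tendsto (fun x : ℝ => |x|⁻¹) atTop (nhds 0) :=
            tendsto_inv_atTop_zero.comp (tendsto_abs_atTop_atTop)
          convert h2 using 2 with x
          simp
        have h3 := (hinv.const_mul a).const_add (1 : ℂ)
        simpa [div_eq_mul_inv] using h3
      have hcont : ContinuousAt Complex.log 1 := by
        apply continuousAt_clog
        rw [Complex.mem_slitPlane_iff]; left; simp
      have h4 := (hcont.tendsto.comp h1).neg
      simpa using h4
    have hc := (hlog0.const_mul (1 / a ^ n)).add hsum0
    rw [hF]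
    simpa only [mul_zero, add_zero] using hc
  have hint : ∀ ε : ℝ, 0 < ε →
      IntegrableOn (fun r : ℝ => 1 / ((r : ℂ) * ((r : ℂ) + a) ^ n)) (Set.Ioi ε) := by
    intro ε hε
    have hg : IntegrableOn (fun r : ℝ => r ^ (-(n : ℝ) - 1)) (Set.Ioi ε) :=
      integrableOn_Ioi_rpow_of_lt
        (by have h1n : (1 : ℝ) ≤ (n : ℝ) := Nat.one_le_cast.mpr hn
            linarith) hε
    apply Integrable.mono hg
    · apply ContinuousOn.aestronglyMeasurable _ measurableSet_Ioi
      apply ContinuousOn.div continuousOn_const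
      · exact (Complex.continuous_ofReal.continuousOn.mul
          (((Complex.continuous_ofReal.continuousOn.add continuousOn_const)).pow n))
      · intro r hr
        have hr0 : 0 < r := lt_trans hε hr
        exact mul_ne_zero (by exact_mod_cast Complex.ofReal_ne_zero.mpr hr0.ne')
          (pow_ne_zero _ (hwne r hr0.le))
    · rw [ae_restrict_iff' measurableSet_Ioi]
      apply ae_of_all
      intro r hr
      have hr0 : 0 < r := lt_trans hε hr
      have habs : r ≤ ‖(r : ℂ) + a‖ := by
        calc r ≤ r + a.re := by linarith
        _ = ((r : ℂ) + a).re := by simp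
        _ ≤ ‖(r : ℂ) + a‖ := Complex.re_le_norm _
      have hpow : r ^ n ≤ (‖(r : ℂ) + a‖) ^ n :=
        pow_le_pow_left₀ hr0.le habs n
      have hlhs : ‖(1 : ℂ) / ((r : ℂ) * ((r : ℂ) + a) ^ n)‖
          = 1 / (r * ‖(r : ℂ) + a‖ ^ n) := by
        simp [norm_mul, norm_pow, Complex.norm_real, Real.norm_eq_abs, abs_of_pos hr0]
      have hrhs : ‖r ^ (-(n : ℝ) - 1)‖ = 1 / (r * r ^ n) := by
        rw [Real.norm_eq_abs, abs_of_nonneg (Real.rpow_nonneg hr0.le _)]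
        rw [show (-(n : ℝ) - 1) = -((n + 1 : ℕ) : ℝ) by push_cast; ring]
        rw [Real.rpow_neg hr0.le, Real.rpow_natCast, pow_succ]
        rw [one_div, mul_comm (r ^ n) r]
      rw [hlhs, hrhs]
      apply one_div_le_one_div_of_le
      · positivity
      · exact mul_le_mul_of_nonneg_left hpow hr0.le
  have hkey : ∀ ε : ℝ, 0 < ε →
      (∫ r in Set.Ioi ε, 1 / ((r : ℂ) * ((r : ℂ) + a) ^ n)) + (Real.log ε : ℂ) / a ^ n
      = (1 / a ^ n) * Complex.log ((ε : ℂ) + a) -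
          ∑ m ∈ Finset.Icc 1 (n - 1),
            (1 / ((m : ℂ) * a ^ (n - m))) * (((ε : ℂ) + a) ^ m)⁻¹ := by
    intro ε hε
    have hI := integral_Ioi_of_hasDerivAt_of_tendsto'
      (f := F) (f' := fun r : ℝ => 1 / ((r : ℂ) * ((r : ℂ) + a) ^ n)) (a := ε) (m := 0)
      (fun x hx => hderiv x (lt_of_lt_of_le hε hx)) (hint ε hε) htop
    rw [hI, hF]
    simp only
    rw [← Complex.ofReal_log hε.le]
    have hpow : (a : ℂ) ^ n ≠ 0 := pow_ne_zero _ ha0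
    field_simp
    ring
  have hval : (1 / a ^ n) * Complex.log a -
      ∑ m ∈ Finset.Icc 1 (n - 1), (1 / ((m : ℂ) * a ^ (n - m))) * ((a : ℂ) ^ m)⁻¹
      = (1 / a ^ n) * (Complex.log a - ∑ j ∈ Finset.Icc 1 (n - 1), 1 / (j : ℂ)) := by
    rw [mul_sub, Finset.mul_sum]
    congr 1
    apply Finset.sum_congr rfl
    intro m hm
    obtain ⟨hm1, hm2⟩ := Finset.mem_Icc.mp hm
    have hpadd : (a : ℂ) ^ (n - m) * a ^ m = a ^ n := by
      rw [← pow_add]; congr 1; omega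
    have hmne : ((m : ℂ)) ≠ 0 := Nat.cast_ne_zero.mpr (by omega)
    have hb1 : (a : ℂ) ^ (n - m) ≠ 0 := pow_ne_zero _ ha0
    have hb2 : (a : ℂ) ^ m ≠ 0 := pow_ne_zero _ ha0
    field_simp
    rw [← hpadd]
  have hG : Tendsto (fun ε : ℝ =>
      (1 / a ^ n) * Complex.log ((ε : ℂ) + a) -
        ∑ m ∈ Finset.Icc 1 (n - 1),
          (1 / ((m : ℂ) * a ^ (n - m))) * (((ε : ℂ) + a) ^ m)⁻¹)
      (nhdsWithin 0 (Set.Ioi 0))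
      (nhds ((1 / a ^ n) *
        (Complex.log a - ∑ j ∈ Finset.Icc 1 (n - 1), 1 / (j : ℂ)))) := by
    have ht1 : Tendsto (fun ε : ℝ => Complex.log ((ε : ℂ) + a)) (nhds 0)
        (nhds (Complex.log a)) := by
      have hin : Tendsto (fun ε : ℝ => (ε : ℂ) + a) (nhds 0) (nhds a) := by
        have hcont : Continuous (fun ε : ℝ => (ε : ℂ) + a) :=
          Complex.continuous_ofReal.add continuous_const
        simpa using hcont.tendsto (0 : ℝ)
      exact ((continuousAt_clog (Or.inl ha2)).tendsto).comp hin
    have ht2 : Tendsto (fun ε : ℝ =>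
        ∑ m ∈ Finset.Icc 1 (n - 1),
          (1 / ((m : ℂ) * a ^ (n - m))) * (((ε : ℂ) + a) ^ m)⁻¹) (nhds 0)
        (nhds (∑ m ∈ Finset.Icc 1 (n - 1),
          (1 / ((m : ℂ) * a ^ (n - m))) * ((a : ℂ) ^ m)⁻¹)) := by
      apply tendsto_finset_sum
      intro m hm
      apply Tendsto.const_mul
      have hin : Tendsto (fun ε : ℝ => ((ε : ℂ) + a) ^ m) (nhds 0) (nhds (a ^ m)) := by
        have hcont : Continuous (fun ε : ℝ => ((ε : ℂ) + a) ^ m) :=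
          (Complex.continuous_ofReal.add continuous_const).pow m
        simpa using hcont.tendsto (0 : ℝ)
      exact hin.inv₀ (pow_ne_zero _ ha0)
    have hcomb := (ht1.const_mul (1 / a ^ n)).sub ht2
    rw [hval] at hcomb
    exact hcomb.mono_left nhdsWithin_le_nhds
  apply hG.congr'
  filter_upwards [self_mem_nhdsWithin] with ε hε
  exact (hkey ε hε).symm
end

section
/- For x > 0, t ∈ ℝ nonzero (so x + it ≠ 0), and integer n ≥ 1, the integral I = ∫_0^1 (1/r)[ 1/((1+r)x − it(1−r))^n − 1/(x − it)^n ] dr + ∫_0^1 r^{n−1}/((1+r)x + it(1−r))^n dr converges and equals (1/(x+it)^n) · a^{−n} · ( Log a − ∑_{j=1}^{n−1} 1/j ), where a = (x−it)/(x+it) and Log is the principal logarithm. -/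
open MeasureTheory

section HKhelpers

open Complex Finset

/-- Antiderivative for the first integral. -/
noncomputable def hkPhi (α β : ℂ) (m : ℕ) (w : ℂ) : ℂ :=
  α ^ (-((m : ℤ) + 1)) * (-(Complex.log (α + w * β)) +
    ∑ k ∈ Finset.Icc 1 m, ((k : ℂ))⁻¹ * α ^ (k : ℕ) * (α + w * β) ^ (-(k : ℤ)))

/-- Antiderivative for the second integral. -/
noncomputable def hkPsi (α β : ℂ) (m : ℕ) (w : ℂ) : ℂ :=
  α ^ (-((m : ℤ) + 1)) * (Complex.log (β + w * α) -
    ∑ k ∈ Finset.Icc 1 m, ((k : ℂ))⁻¹ * (w * α) ^ (k : ℕ) * (β + w * α) ^ (-(k : ℤ)))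

/-- Continuous version of the first integrand. -/
noncomputable def hkG1 (α β : ℂ) (m : ℕ) (w : ℂ) : ℂ :=
  -(β * α ^ (-((m : ℤ) + 1))) *
    ∑ k ∈ Finset.Icc 1 (m + 1), α ^ (k - 1 : ℕ) * (α + w * β) ^ (-(k : ℤ))

/-- The second integrand. -/
noncomputable def hkG2 (α β : ℂ) (m : ℕ) (w : ℂ) : ℂ :=
  w ^ m * (β + w * α) ^ (-((m : ℤ) + 1))

lemma hkIccSum {M : Type*} [AddCommMonoid M] (m : ℕ) (f : ℕ → M) :
    ∑ k ∈ Finset.Icc 1 m, f k = ∑ i ∈ Finset.range m, f (1 + i) := by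
  rw [← Finset.Ico_add_one_right_eq_Icc, Finset.sum_Ico_eq_sum_range]
  simp

lemma hkzpow (c : ℂ) (m : ℕ) : c ^ (-((m : ℤ) + 1)) = (c ^ (m + 1))⁻¹ := by
  rw [show -((m : ℤ) + 1) = -((m + 1 : ℕ) : ℤ) by push_cast; ring, zpow_neg, zpow_natCast]

theorem hkPhi_hasDerivAt (α β : ℂ) (m : ℕ) (w : ℂ) (hre : 0 < (α + w * β).re) :
    HasDerivAt (hkPhi α β m) (hkG1 α β m w) w := by
  have hne : α + w * β ≠ 0 := fun h => by simp [h] at hre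
  have hlin : HasDerivAt (fun w : ℂ => α + w * β) β w := by
    simpa using ((hasDerivAt_id w).mul_const β).const_add α
  have hlog : HasDerivAt (fun w : ℂ => Complex.log (α + w * β)) ((α + w * β)⁻¹ * β) w :=
    by have := (Complex.hasDerivAt_log (Or.inl hre)).comp w hlin; exact this
  have hterm : ∀ k ∈ Finset.Icc 1 m, HasDerivAt
      (fun w : ℂ => ((k : ℂ))⁻¹ * α ^ (k : ℕ) * (α + w * β) ^ (-(k : ℤ)))
      (((k : ℂ))⁻¹ * α ^ (k : ℕ) *
        (((-(k : ℤ) : ℤ) : ℂ) * (α + w * β) ^ (-(k : ℤ) - 1) * β)) w := by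
    intro k hk
    exact ((hasDerivAt_zpow (-(k : ℤ)) _ (Or.inl hne)).comp w hlin).const_mul _
  have hmain := ((hlog.neg.add (HasDerivAt.fun_sum hterm)).const_mul (α ^ (-((m : ℤ) + 1))))
  have hval : hkG1 α β m w = α ^ (-((m : ℤ) + 1)) *
      (-((α + w * β)⁻¹ * β) + ∑ k ∈ Finset.Icc 1 m, ((k : ℂ))⁻¹ * α ^ (k : ℕ) *
        (((-(k : ℤ) : ℤ) : ℂ) * (α + w * β) ^ (-(k : ℤ) - 1) * β)) := by
    unfold hkG1
    rw [hkIccSum (m + 1) (fun k => α ^ (k - 1 : ℕ) * (α + w * β) ^ (-(k : ℤ))),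
      Finset.sum_range_succ', hkIccSum m]
    have hterm2 : ∀ i ∈ Finset.range m,
        (((1 + i : ℕ) : ℂ))⁻¹ * α ^ (1 + i : ℕ) *
          (((-((1 + i : ℕ) : ℤ) : ℤ) : ℂ) * (α + w * β) ^ (-((1 + i : ℕ) : ℤ) - 1) * β) =
        -β * (α ^ (1 + (i + 1) - 1 : ℕ) * (α + w * β) ^ (-((1 + (i + 1) : ℕ) : ℤ))) := by
      intro i _
      have h1 : (((1 + i : ℕ) : ℂ)) ≠ 0 := Nat.cast_ne_zero.mpr (by omega)
      have h1' : ((1 : ℂ) + (i : ℂ)) ≠ 0 := by push_cast at h1; exact h1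
      have h2 : (-((1 + i : ℕ) : ℤ) - 1) = -((1 + (i + 1) : ℕ) : ℤ) := by push_cast; ring
      have h3 : (1 + (i + 1) - 1 : ℕ) = 1 + i := by omega
      rw [h2, h3]
      push_cast
      field_simp [h1']
    rw [Finset.sum_congr rfl hterm2]
    rw [show (∑ i ∈ Finset.range m,
        -β * (α ^ (1 + (i + 1) - 1 : ℕ) * (α + w * β) ^ (-((1 + (i + 1) : ℕ) : ℤ)))) =
        -β * ∑ i ∈ Finset.range m,
          (α ^ (1 + (i + 1) - 1 : ℕ) * (α + w * β) ^ (-((1 + (i + 1) : ℕ) : ℤ))) from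
      (Finset.mul_sum _ _ _).symm]
    simp only [Nat.add_zero, pow_zero, one_mul, Nat.cast_one]
    rw [zpow_neg_one]
    ring
  rw [hval]
  exact hmain

theorem hkPsi_hasDerivAt (α β : ℂ) (m : ℕ) (w : ℂ) (hre : 0 < (β + w * α).re)
    (hα : α ≠ 0) : HasDerivAt (hkPsi α β m) (hkG2 α β m w) w := by
  have hne : β + w * α ≠ 0 := fun h => by simp [h] at hre
  have hlin : HasDerivAt (fun w : ℂ => β + w * α) α w := by
    simpa using ((hasDerivAt_id w).mul_const α).const_add β
  have hlog : HasDerivAt (fun w : ℂ => Complex.log (β + w * α)) ((β + w * α)⁻¹ * α) w :=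
    by have := (Complex.hasDerivAt_log (Or.inl hre)).comp w hlin; exact this
  have hterm : ∀ k ∈ Finset.Icc 1 m, HasDerivAt
      (fun w : ℂ => ((k : ℂ))⁻¹ * (w * α) ^ (k : ℕ) * (β + w * α) ^ (-(k : ℤ)))
      (((k : ℂ))⁻¹ * (((k : ℕ) : ℂ) * (w * α) ^ (k - 1 : ℕ) * (1 * α) * (β + w * α) ^ (-(k : ℤ))
        + (w * α) ^ (k : ℕ) *
          (((-(k : ℤ) : ℤ) : ℂ) * (β + w * α) ^ (-(k : ℤ) - 1) * α))) w := by
    intro k hk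
    have hp : HasDerivAt (fun w : ℂ => (w * α) ^ (k : ℕ))
        (((k : ℕ) : ℂ) * (w * α) ^ (k - 1 : ℕ) * (1 * α)) w :=
      ((hasDerivAt_id w).mul_const α).pow k
    have hq : HasDerivAt (fun w : ℂ => (β + w * α) ^ (-(k : ℤ)))
        (((-(k : ℤ) : ℤ) : ℂ) * (β + w * α) ^ (-(k : ℤ) - 1) * α) w :=
      by have := (hasDerivAt_zpow (-(k : ℤ)) _ (Or.inl hne)).comp w hlin; exact this
    have := (hp.mul hq).const_mul ((k : ℂ))⁻¹
    simpa [mul_assoc] using this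
  have hmain := ((hlog.sub (HasDerivAt.fun_sum hterm)).const_mul (α ^ (-((m : ℤ) + 1))))
  -- simplify each summand of the derivative
  have hterm2 : ∀ k ∈ Finset.Icc 1 m,
      ((k : ℂ))⁻¹ * (((k : ℕ) : ℂ) * (w * α) ^ (k - 1 : ℕ) * (1 * α) * (β + w * α) ^ (-(k : ℤ))
        + (w * α) ^ (k : ℕ) * (((-(k : ℤ) : ℤ) : ℂ) * (β + w * α) ^ (-(k : ℤ) - 1) * α)) =
      α * β * ((w * α) ^ (k - 1 : ℕ) * (β + w * α) ^ (-(k : ℤ) - 1)) := by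
    intro k hk
    obtain ⟨hk1, _⟩ := Finset.mem_Icc.mp hk
    have hkc : ((k : ℕ) : ℂ) ≠ 0 := Nat.cast_ne_zero.mpr (by omega)
    have hy : (β + w * α) ^ (-(k : ℤ)) = (β + w * α) ^ (-(k : ℤ) - 1) * (β + w * α) := by
      rw [← zpow_add_one₀ hne]
      norm_num
    have hwα : (w * α) ^ (k : ℕ) = (w * α) ^ (k - 1 : ℕ) * (w * α) := by
      conv_lhs => rw [show (k : ℕ) = (k - 1) + 1 by omega]
      rw [pow_succ]
    rw [hy, hwα]
    push_cast
    field_simp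
    ring
  have hgeom := geom_sum₂_mul (β + w * α) (w * α) m
  have hβ : (β + w * α) - w * α = β := by ring
  rw [hβ] at hgeom
  -- the summand sum equals a geometric sum
  have hsum : ∑ k ∈ Finset.Icc 1 m, (w * α) ^ (k - 1 : ℕ) * (β + w * α) ^ (-(k : ℤ) - 1) =
      (β + w * α) ^ (-((m : ℤ) + 1)) *
        ∑ i ∈ Finset.range m, (β + w * α) ^ i * (w * α) ^ (m - 1 - i) := by
    rw [hkIccSum m (fun k => (w * α) ^ (k - 1 : ℕ) * (β + w * α) ^ (-(k : ℤ) - 1)),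
      Finset.mul_sum,
      ← Finset.sum_range_reflect
        (fun i => (β + w * α) ^ (-((m : ℤ) + 1)) * ((β + w * α) ^ i * (w * α) ^ (m - 1 - i))) m]
    refine Finset.sum_congr rfl fun i hi => ?_
    have him : i < m := Finset.mem_range.mp hi
    have h1 : (1 + i - 1 : ℕ) = i := by omega
    have h2 : (m - 1 - (m - 1 - i) : ℕ) = i := by omega
    rw [h1, h2]
    have h3 : (β + w * α) ^ (-((m : ℤ) + 1)) * (β + w * α) ^ (m - 1 - i : ℕ) =
        (β + w * α) ^ (-((1 + i : ℕ) : ℤ) - 1) := by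
      rw [← zpow_natCast (β + w * α) (m - 1 - i), ← zpow_add₀ hne]
      congr 1
      have : ((m - 1 - i : ℕ) : ℤ) = (m : ℤ) - 1 - i := by omega
      rw [this]
      push_cast
      ring
    rw [← h3]
    ring
  have hval : hkG2 α β m w = α ^ (-((m : ℤ) + 1)) *
      ((β + w * α)⁻¹ * α - ∑ k ∈ Finset.Icc 1 m,
        ((k : ℂ))⁻¹ * (((k : ℕ) : ℂ) * (w * α) ^ (k - 1 : ℕ) * (1 * α) *
            (β + w * α) ^ (-(k : ℤ))
          + (w * α) ^ (k : ℕ) *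
            (((-(k : ℤ) : ℤ) : ℂ) * (β + w * α) ^ (-(k : ℤ) - 1) * α))) := by
    rw [Finset.sum_congr rfl hterm2, ← Finset.mul_sum, hsum]
    unfold hkG2
    simp only [hkzpow]
    have hy1 : (β + w * α)⁻¹ = ((β + w * α) ^ (m + 1))⁻¹ * (β + w * α) ^ m := by
      rw [pow_succ, mul_inv, mul_assoc, mul_comm (β + w * α)⁻¹, ← mul_assoc,
        inv_mul_cancel₀ (pow_ne_zero m hne), one_mul]
    rw [hy1]
    have hA : α ^ (m + 1) ≠ 0 := pow_ne_zero _ hα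
    have hAinv : (α ^ (m + 1))⁻¹ * α ^ (m + 1) = 1 := inv_mul_cancel₀ hA
    linear_combination ((α ^ (m + 1))⁻¹ * ((β + w * α) ^ (m + 1))⁻¹ * α) * hgeom -
      (w ^ m * ((β + w * α) ^ (m + 1))⁻¹) * hAinv
  rw [hval]
  exact hmain

theorem hkG1_eq (α β : ℂ) (m : ℕ) (z : ℂ) (hα : α ≠ 0) (hβ : β ≠ 0) (hz : z ≠ 0)
    (hne : α + z * β ≠ 0) :
    hkG1 α β m z = (1 / z) * (1 / (α + z * β) ^ (m + 1) - 1 / α ^ (m + 1)) := by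
  have hgeom := geom_sum₂_mul (α + z * β) α (m + 1)
  have hd : (α + z * β) - α = z * β := by ring
  rw [hd] at hgeom
  have hsum : ∑ k ∈ Finset.Icc 1 (m + 1), α ^ (k - 1 : ℕ) * (α + z * β) ^ (-(k : ℤ)) =
      (α + z * β) ^ (-((m : ℤ) + 1)) *
        ∑ i ∈ Finset.range (m + 1), (α + z * β) ^ i * α ^ (m + 1 - 1 - i) := by
    rw [hkIccSum (m + 1) (fun k => α ^ (k - 1 : ℕ) * (α + z * β) ^ (-(k : ℤ))),
      Finset.mul_sum,
      ← Finset.sum_range_reflect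
        (fun i => (α + z * β) ^ (-((m : ℤ) + 1)) * ((α + z * β) ^ i * α ^ (m + 1 - 1 - i)))
        (m + 1)]
    refine Finset.sum_congr rfl fun i hi => ?_
    have him : i < m + 1 := Finset.mem_range.mp hi
    have h1 : (1 + i - 1 : ℕ) = i := by omega
    have h2 : (m + 1 - 1 - (m + 1 - 1 - i) : ℕ) = i := by omega
    rw [h1, h2]
    have h3 : (α + z * β) ^ (-((m : ℤ) + 1)) * (α + z * β) ^ (m + 1 - 1 - i : ℕ) =
        (α + z * β) ^ (-((1 + i : ℕ) : ℤ)) := by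
      rw [← zpow_natCast (α + z * β) (m + 1 - 1 - i), ← zpow_add₀ hne]
      congr 1
      have : ((m + 1 - 1 - i : ℕ) : ℤ) = (m : ℤ) - i := by omega
      rw [this]
      push_cast
      ring
    rw [← h3]
    ring
  unfold hkG1
  rw [hsum]
  simp only [hkzpow]
  have hA : α ^ (m + 1) ≠ 0 := pow_ne_zero _ hα
  have hB : (α + z * β) ^ (m + 1) ≠ 0 := pow_ne_zero _ hne
  have hAinv : (α ^ (m + 1))⁻¹ * α ^ (m + 1) = 1 := inv_mul_cancel₀ hA
  have hBinv : ((α + z * β) ^ (m + 1))⁻¹ * (α + z * β) ^ (m + 1) = 1 := inv_mul_cancel₀ hB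
  have hzinv : z⁻¹ * z = 1 := inv_mul_cancel₀ hz
  linear_combination (-((α ^ (m + 1))⁻¹ * ((α + z * β) ^ (m + 1))⁻¹ * z⁻¹)) * hgeom +
    (-((α ^ (m + 1))⁻¹ * z⁻¹)) * hBinv + (((α + z * β) ^ (m + 1))⁻¹ * z⁻¹) * hAinv +
    (β * (α ^ (m + 1))⁻¹ * ((α + z * β) ^ (m + 1))⁻¹ *
      ∑ i ∈ Finset.range (m + 1), (α + z * β) ^ i * α ^ (m + 1 - 1 - i)) * hzinv

lemma hk_rePos {α β : ℂ} (hα : 0 < α.re) (hβ : 0 < β.re) {r : ℝ}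
    (hr : r ∈ Set.uIcc (0 : ℝ) 1) : 0 < (α + (r : ℂ) * β).re := by
  rw [Set.uIcc_of_le zero_le_one] at hr
  have h : ((r : ℂ) * β).re = r * β.re := by
    simp [Complex.mul_re]
  simp only [Complex.add_re, h]
  nlinarith [hr.1, hr.2]

theorem hkInt1 (α β : ℂ) (hα : 0 < α.re) (hβ : 0 < β.re) (m : ℕ) :
    IntegrableOn (fun r : ℝ => hkG1 α β m r) (Set.Ioo 0 1) ∧
      ∫ r in Set.Ioo (0 : ℝ) 1, hkG1 α β m r = hkPhi α β m 1 - hkPhi α β m 0 := by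
  have hrepos : ∀ r ∈ Set.uIcc (0 : ℝ) 1, 0 < (α + (r : ℂ) * β).re :=
    fun r hr => hk_rePos hα hβ hr
  have hcont : ContinuousOn (fun r : ℝ => hkG1 α β m r) (Set.uIcc 0 1) := by
    apply ContinuousOn.fun_mul continuousOn_const
    apply continuousOn_finset_sum
    intro k _
    apply ContinuousOn.fun_mul continuousOn_const
    apply ContinuousOn.zpow₀ _ _ (fun r hr => Or.inl (fun h => by
      have := hrepos r hr; rw [h] at this; simp at this))
    exact Continuous.continuousOn (by fun_prop)
  have hderiv : ∀ r ∈ Set.uIcc (0 : ℝ) 1,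
      HasDerivAt (fun s : ℝ => hkPhi α β m s) (hkG1 α β m r) r :=
    fun r hr => (hkPhi_hasDerivAt α β m r (hrepos r hr)).comp_ofReal
  have hii : IntervalIntegrable (fun r : ℝ => hkG1 α β m r) volume 0 1 :=
    hcont.intervalIntegrable
  have hftc := intervalIntegral.integral_eq_sub_of_hasDerivAt hderiv hii
  constructor
  · exact ((intervalIntegrable_iff_integrableOn_Ioc_of_le zero_le_one).mp hii).mono_set
      Set.Ioo_subset_Ioc_self
  · rw [← MeasureTheory.integral_Ioc_eq_integral_Ioo,
      ← intervalIntegral.integral_of_le zero_le_one, hftc]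
    norm_num

theorem hkInt2 (α β : ℂ) (hα : 0 < α.re) (hβ : 0 < β.re) (m : ℕ) :
    IntegrableOn (fun r : ℝ => hkG2 α β m r) (Set.Ioo 0 1) ∧
      ∫ r in Set.Ioo (0 : ℝ) 1, hkG2 α β m r = hkPsi α β m 1 - hkPsi α β m 0 := by
  have hα0 : α ≠ 0 := fun h => by rw [h] at hα; simp at hα
  have hrepos : ∀ r ∈ Set.uIcc (0 : ℝ) 1, 0 < (β + (r : ℂ) * α).re :=
    fun r hr => hk_rePos hβ hα hr
  have hcont : ContinuousOn (fun r : ℝ => hkG2 α β m r) (Set.uIcc 0 1) := by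
    apply ContinuousOn.fun_mul
    · exact (Complex.continuous_ofReal.pow m).continuousOn
    apply ContinuousOn.zpow₀ _ _ (fun r hr => Or.inl (fun h => by
      have := hrepos r hr; rw [h] at this; simp at this))
    exact Continuous.continuousOn (by fun_prop)
  have hderiv : ∀ r ∈ Set.uIcc (0 : ℝ) 1,
      HasDerivAt (fun s : ℝ => hkPsi α β m s) (hkG2 α β m r) r :=
    fun r hr => (hkPsi_hasDerivAt α β m r (hrepos r hr) hα0).comp_ofReal
  have hii : IntervalIntegrable (fun r : ℝ => hkG2 α β m r) volume 0 1 :=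
    hcont.intervalIntegrable
  have hftc := intervalIntegral.integral_eq_sub_of_hasDerivAt hderiv hii
  constructor
  · exact ((intervalIntegrable_iff_integrableOn_Ioc_of_le zero_le_one).mp hii).mono_set
      Set.Ioo_subset_Ioc_self
  · rw [← MeasureTheory.integral_Ioc_eq_integral_Ioo,
      ← intervalIntegral.integral_of_le zero_le_one, hftc]
    norm_num

lemma hklog (α β : ℂ) (hα : 0 < α.re) (hβ : 0 < β.re) :
    Complex.log (α / β) = Complex.log α - Complex.log β := by
  have hα0 : α ≠ 0 := fun h => by rw [h] at hα; simp at hα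
  have hβ0 : β ≠ 0 := fun h => by rw [h] at hβ; simp at hβ
  have ha : |Complex.arg α| < Real.pi / 2 := Complex.abs_arg_lt_pi_div_two_iff.mpr (Or.inl hα)
  have hb : |Complex.arg β| < Real.pi / 2 := Complex.abs_arg_lt_pi_div_two_iff.mpr (Or.inl hβ)
  have hbne : Complex.arg β ≠ Real.pi := by
    intro h
    rw [h, abs_of_pos Real.pi_pos] at hb
    linarith [Real.pi_pos]
  have harg : Complex.arg α + Complex.arg β⁻¹ ∈ Set.Ioc (-Real.pi) Real.pi := by
    rw [Complex.arg_inv, if_neg hbne, Set.mem_Ioc]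
    rw [abs_lt] at ha hb
    constructor
    · linarith [Real.pi_pos]
    · linarith [Real.pi_pos]
  rw [div_eq_mul_inv, Complex.log_mul hα0 (inv_ne_zero hβ0) harg, Complex.log_inv β hbne,
    sub_eq_add_neg]

end HKhelpers

/-- Key integral evaluation in the Heisenberg group relative fundamental
solution (Theorem 5.3). -/
theorem heisenberg_key_integral (x t : ℝ) (hx : 0 < x) (ht : t ≠ 0)
    (n : ℕ) (hn : 1 ≤ n) :
    IntegrableOn
        (fun r : ℝ => (1 / (r : ℂ)) *
          (1 / (((1 + r) * x : ℂ) - t * Complex.I * (1 - r)) ^ n -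
            1 / ((x : ℂ) - t * Complex.I) ^ n)) (Set.Ioo 0 1) ∧
      IntegrableOn
        (fun r : ℝ => (r : ℂ) ^ (n - 1) /
          (((1 + r) * x : ℂ) + t * Complex.I * (1 - r)) ^ n) (Set.Ioo 0 1) ∧
      (∫ r in Set.Ioo (0 : ℝ) 1, (1 / (r : ℂ)) *
            (1 / (((1 + r) * x : ℂ) - t * Complex.I * (1 - r)) ^ n -
              1 / ((x : ℂ) - t * Complex.I) ^ n)) +
          (∫ r in Set.Ioo (0 : ℝ) 1, (r : ℂ) ^ (n - 1) /
            (((1 + r) * x : ℂ) + t * Complex.I * (1 - r)) ^ n) =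
        (1 / ((x : ℂ) + t * Complex.I) ^ n) *
          (((x - t * Complex.I) / (x + t * Complex.I)) ^ n)⁻¹ *
          (Complex.log ((x - t * Complex.I) / (x + t * Complex.I)) -
            ∑ j ∈ Finset.Icc 1 (n - 1), 1 / (j : ℂ)) := by
  obtain ⟨m, rfl⟩ : ∃ m, n = m + 1 := ⟨n - 1, by omega⟩
  set α : ℂ := (x : ℂ) - t * Complex.I with hαdef
  set β : ℂ := (x : ℂ) + t * Complex.I with hβdef
  have hαre : 0 < α.re := by simp [hαdef, Complex.sub_re, Complex.mul_re]; exact hx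
  have hβre : 0 < β.re := by simp [hβdef, Complex.add_re, Complex.mul_re]; exact hx
  have hα0 : α ≠ 0 := fun h => by rw [h] at hαre; simp at hαre
  have hβ0 : β ≠ 0 := fun h => by rw [h] at hβre; simp at hβre
  have e₁ : ∀ r : ℝ, (((1 + r) * x : ℂ) - t * Complex.I * (1 - r)) = α + r * β := by
    intro r; rw [hαdef, hβdef]; push_cast; ring
  have e₂ : ∀ r : ℝ, (((1 + r) * x : ℂ) + t * Complex.I * (1 - r)) = β + r * α := by
    intro r; rw [hαdef, hβdef]; push_cast; ring
  have h1 := hkInt1 α β hαre hβre m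
  have h2 := hkInt2 α β hαre hβre m
  -- the original integrands agree with hkG1/hkG2 on (0,1)
  have heq1 : Set.EqOn (fun r : ℝ => hkG1 α β m r)
      (fun r : ℝ => (1 / (r : ℂ)) *
        (1 / (((1 + r) * x : ℂ) - t * Complex.I * (1 - r)) ^ (m + 1) -
          1 / ((x : ℂ) - t * Complex.I) ^ (m + 1))) (Set.Ioo 0 1) := by
    intro r hr
    have hz : (r : ℂ) ≠ 0 := by
      simp only [ne_eq, Complex.ofReal_eq_zero]
      exact hr.1.ne'
    have hne : α + (r : ℂ) * β ≠ 0 := by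
      have := hk_rePos hαre hβre (r := r) (by
        rw [Set.uIcc_of_le zero_le_one]
        exact ⟨hr.1.le, hr.2.le⟩)
      intro h; rw [h] at this; simp at this
    simp only [e₁]
    exact hkG1_eq α β m r hα0 hβ0 hz hne
  have heq2 : Set.EqOn (fun r : ℝ => hkG2 α β m r)
      (fun r : ℝ => (r : ℂ) ^ (m + 1 - 1) /
        (((1 + r) * x : ℂ) + t * Complex.I * (1 - r)) ^ (m + 1)) (Set.Ioo 0 1) := by
    intro r hr
    simp only [e₂, Nat.add_sub_cancel]
    rw [hkG2, hkzpow, div_eq_mul_inv]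
  have hint1 : IntegrableOn (fun r : ℝ => (1 / (r : ℂ)) *
      (1 / (((1 + r) * x : ℂ) - t * Complex.I * (1 - r)) ^ (m + 1) -
        1 / ((x : ℂ) - t * Complex.I) ^ (m + 1))) (Set.Ioo (0:ℝ) 1) :=
    h1.1.congr_fun heq1 measurableSet_Ioo
  have hint2 : IntegrableOn (fun r : ℝ => (r : ℂ) ^ (m + 1 - 1) /
      (((1 + r) * x : ℂ) + t * Complex.I * (1 - r)) ^ (m + 1)) (Set.Ioo (0:ℝ) 1) :=
    h2.1.congr_fun heq2 measurableSet_Ioo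
  refine ⟨hint1, hint2, ?_⟩
  rw [← MeasureTheory.setIntegral_congr_fun measurableSet_Ioo heq1,
    ← MeasureTheory.setIntegral_congr_fun measurableSet_Ioo heq2, h1.2, h2.2]
  -- evaluate the antiderivatives
  have hφ0 : hkPhi α β m 0 = α ^ (-((m : ℤ) + 1)) *
      (-(Complex.log α) + ∑ k ∈ Finset.Icc 1 m, ((k : ℂ))⁻¹) := by
    unfold hkPhi
    congr 1
    rw [zero_mul, add_zero]
    congr 1
    refine Finset.sum_congr rfl fun k _ => ?_
    rw [mul_assoc, ← zpow_natCast α k, ← zpow_add₀ hα0]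
    simp
  have hψ0 : hkPsi α β m 0 = α ^ (-((m : ℤ) + 1)) * Complex.log β := by
    unfold hkPsi
    rw [zero_mul, add_zero]
    rw [Finset.sum_eq_zero (fun k hk => by
      have hk0 : k ≠ 0 := by have := (Finset.mem_Icc.mp hk).1; omega
      simp [zero_pow hk0]), sub_zero]
  have hφψ1 : hkPhi α β m 1 + hkPsi α β m 1 = 0 := by
    unfold hkPhi hkPsi
    rw [show β + (1 : ℂ) * α = α + 1 * β by ring]
    simp only [one_mul]
    ring
  have key : hkPhi α β m 1 - hkPhi α β m 0 + (hkPsi α β m 1 - hkPsi α β m 0) =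
      α ^ (-((m : ℤ) + 1)) *
        (Complex.log α - Complex.log β - ∑ k ∈ Finset.Icc 1 m, ((k : ℂ))⁻¹) := by
    have : hkPhi α β m 1 + hkPsi α β m 1 = 0 := hφψ1
    rw [hφ0, hψ0] at *
    linear_combination this
  rw [key, hklog α β hαre hβre, Nat.add_sub_cancel]
  rw [hkzpow]
  have hA : α ^ (m + 1) ≠ 0 := pow_ne_zero _ hα0
  have hB : β ^ (m + 1) ≠ 0 := pow_ne_zero _ hβ0
  have hsums : ∑ j ∈ Finset.Icc 1 m, 1 / (j : ℂ) = ∑ k ∈ Finset.Icc 1 m, ((k : ℂ))⁻¹ := by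
    simp [one_div]
  rw [hsums, div_pow]
  field_simp
end

section
/- The Szegő kernel on the product of two Heisenberg groups satisfies: for z₁, z₂ ∈ ℂ nonzero and t₁, t₂ ∈ ℝ, (6/π⁴) ∫_π^{3π/2} (cos θ sin θ) / ( (|z₁|² + i t₁) cos θ + (|z₂|² + i t₂) sin θ )⁴ dθ = 1 / ( π⁴ (|z₁|² + i t₁)² (|z₂|² + i t₂)² ). -/
open MeasureTheory Real


lemma denom_ne (a b : ℂ) (ha : 0 < a.re) (hb : 0 < b.re) {θ : ℝ}
    (h1 : π ≤ θ) (h2 : θ ≤ 3 * π / 2) :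
    a * (Real.cos θ : ℂ) + b * (Real.sin θ : ℂ) ≠ 0 := by
  have hc : Real.cos θ ≤ 0 :=
    Real.cos_nonpos_of_pi_div_two_le_of_le (by linarith [Real.pi_pos]) (by linarith)
  have hs : Real.sin θ ≤ 0 := by
    have h := Real.sin_nonneg_of_nonneg_of_le_pi (x := θ - π) (by linarith) (by linarith)
    rw [Real.sin_sub_pi] at h; linarith
  have hpy := Real.sin_sq_add_cos_sq θ
  intro h
  have hre : a.re * Real.cos θ + b.re * Real.sin θ = 0 := by
    have := congrArg Complex.re h
    simpa [Complex.add_re, Complex.mul_re, Complex.ofReal_re, Complex.ofReal_im,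
      Complex.cos_ofReal_re, Complex.sin_ofReal_re] using this
  have h1' : a.re * Real.cos θ ≤ 0 := mul_nonpos_of_nonneg_of_nonpos ha.le hc
  have h2' : b.re * Real.sin θ ≤ 0 := mul_nonpos_of_nonneg_of_nonpos hb.le hs
  have e1 : a.re * Real.cos θ = 0 := by linarith
  have e2 : b.re * Real.sin θ = 0 := by linarith
  have hc0 : Real.cos θ = 0 := by
    rcases mul_eq_zero.1 e1 with h' | h'
    · exact absurd h' (ne_of_gt ha)
    · exact h'
  have hs0 : Real.sin θ = 0 := by
    rcases mul_eq_zero.1 e2 with h' | h'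
    · exact absurd h' (ne_of_gt hb)
    · exact h'
  rw [hc0, hs0] at hpy
  norm_num at hpy

lemma key_integral (a b : ℂ) (ha : 0 < a.re) (hb : 0 < b.re) :
    ∫ θ in π..(3 * π / 2),
      ((Real.cos θ : ℂ) * (Real.sin θ : ℂ)) / (a * Real.cos θ + b * Real.sin θ) ^ 4
      = 1 / (6 * a ^ 2 * b ^ 2) := by
  have ha0 : a ≠ 0 := fun h => by simp [h] at ha
  have hb0 : b ≠ 0 := fun h => by simp [h] at hb
  set D : ℝ → ℂ := fun θ => a * Real.cos θ + b * Real.sin θ with hDdef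
  set F : ℝ → ℂ := fun θ =>
    -((Real.cos θ : ℂ) * (Real.cos θ : ℂ)) / (2 * b ^ 2 * (D θ * D θ)) +
      a * ((Real.cos θ : ℂ) * (Real.cos θ : ℂ) * (Real.cos θ : ℂ)) / (3 * b ^ 2 * (D θ * (D θ * D θ)))
    with hFdef
  have hle : π ≤ 3 * π / 2 := by linarith [Real.pi_pos]
  have hD : ∀ θ ∈ Set.uIcc π (3 * π / 2), D θ ≠ 0 := by
    intro θ hθ
    rw [Set.uIcc_of_le hle] at hθ
    exact denom_ne a b ha hb hθ.1 hθ.2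
  have hderiv : ∀ θ ∈ Set.uIcc π (3 * π / 2),
      HasDerivAt F (((Real.cos θ : ℂ) * (Real.sin θ : ℂ)) / D θ ^ 4) θ := by
    intro θ hθ
    have hDθ : D θ ≠ 0 := hD θ hθ
    have hc : HasDerivAt (fun θ : ℝ => (Real.cos θ : ℂ)) (-(Real.sin θ : ℂ)) θ := by
      have := (Real.hasDerivAt_cos θ).ofReal_comp
      simpa using this
    have hs : HasDerivAt (fun θ : ℝ => (Real.sin θ : ℂ)) ((Real.cos θ : ℂ)) θ :=
      (Real.hasDerivAt_sin θ).ofReal_comp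
    have hDd : HasDerivAt D (a * (-(Real.sin θ : ℂ)) + b * (Real.cos θ : ℂ)) θ :=
      (hc.const_mul a).add (hs.const_mul b)
    have n1 : (2 * b ^ 2 * (D θ * D θ)) ≠ 0 :=
      mul_ne_zero (mul_ne_zero two_ne_zero (pow_ne_zero _ hb0)) (mul_ne_zero hDθ hDθ)
    have n2 : (3 * b ^ 2 * (D θ * (D θ * D θ))) ≠ 0 :=
      mul_ne_zero (mul_ne_zero three_ne_zero (pow_ne_zero _ hb0))
        (mul_ne_zero hDθ (mul_ne_zero hDθ hDθ))
    have h1 := ((hc.mul hc).neg.div (HasDerivAt.const_mul (2 * b ^ 2) (hDd.mul hDd)) n1)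
    have h2 := ((HasDerivAt.const_mul a ((hc.mul hc).mul hc)).div
      (HasDerivAt.const_mul (3 * b ^ 2) (hDd.mul (hDd.mul hDd))) n2)
    have hsum : HasDerivAt F _ θ := h1.add h2
    refine hsum.congr_deriv ?_
    have hpy : (Real.sin θ : ℂ) ^ 2 = 1 - (Real.cos θ : ℂ) ^ 2 := by
      have h := Real.sin_sq_add_cos_sq θ
      have h2 : ((Real.sin θ : ℂ)) ^ 2 + ((Real.cos θ : ℂ)) ^ 2 = 1 := by
        norm_cast
      linear_combination h2
    have d4 : D θ ^ 4 ≠ 0 := pow_ne_zero _ hDθ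
    simp only [Pi.mul_apply, Pi.neg_apply]
    rw [div_add_div _ _ (pow_ne_zero 2 n1) (pow_ne_zero 2 n2),
      div_eq_div_iff (mul_ne_zero (pow_ne_zero 2 n1) (pow_ne_zero 2 n2)) d4]
    simp only [hDdef]
    linear_combination (36 * b ^ 8 * (Real.cos θ : ℂ) * (Real.sin θ : ℂ) *
      (a * (Real.cos θ : ℂ) + b * (Real.sin θ : ℂ)) ^ 10) * hpy
  have hcont : IntervalIntegrable
      (fun θ : ℝ => ((Real.cos θ : ℂ) * (Real.sin θ : ℂ)) / D θ ^ 4) volume π (3 * π / 2) := by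
    apply ContinuousOn.intervalIntegrable
    apply ContinuousOn.div
    · fun_prop
    · fun_prop
    · intro θ hθ
      exact pow_ne_zero _ (hD θ hθ)
  have := intervalIntegral.integral_eq_sub_of_hasDerivAt hderiv hcont
  rw [hDdef] at this
  rw [this]
  have h32 : (3 * π / 2 : ℝ) = π + π / 2 := by ring
  have hcos32 : Real.cos (3 * π / 2) = 0 := by
    rw [h32, Real.cos_add, Real.cos_pi, Real.sin_pi, Real.cos_pi_div_two]; ring
  have hsin32 : Real.sin (3 * π / 2) = -1 := by
    rw [h32, Real.sin_add, Real.cos_pi, Real.sin_pi, Real.sin_pi_div_two]; ring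
  simp only [hFdef, hDdef, hcos32, hsin32, Real.cos_pi, Real.sin_pi]
  push_cast
  field_simp
  ring_nf
  field_simp

/-- Evaluation of the Szegő kernel for the product of two Heisenberg groups. -/
theorem szego_product_heisenberg (z1 z2 : ℂ) (hz1 : z1 ≠ 0) (hz2 : z2 ≠ 0)
    (t1 t2 : ℝ) :
    (6 / (π : ℂ) ^ 4) *
        ∫ θ in Set.Ioo π (3 * π / 2),
          ((Real.cos θ : ℂ) * (Real.sin θ : ℂ)) /
            (((‖z1‖ ^ 2 : ℝ) + t1 * Complex.I) * Real.cos θ +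
              ((‖z2‖ ^ 2 : ℝ) + t2 * Complex.I) * Real.sin θ) ^ 4 =
      1 / ((π : ℂ) ^ 4 * ((‖z1‖ ^ 2 : ℝ) + t1 * Complex.I) ^ 2 *
        ((‖z2‖ ^ 2 : ℝ) + t2 * Complex.I) ^ 2) := by
  set a : ℂ := ((‖z1‖ ^ 2 : ℝ) : ℂ) + t1 * Complex.I with ha_def
  set b : ℂ := ((‖z2‖ ^ 2 : ℝ) : ℂ) + t2 * Complex.I with hb_def
  have ha : 0 < a.re := by
    have h1 : 0 < ‖z1‖ := norm_pos_iff.mpr hz1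
    simp only [ha_def, Complex.add_re, Complex.mul_re, Complex.ofReal_re, Complex.ofReal_im,
      Complex.I_re, Complex.I_im, mul_zero, mul_one, zero_sub, zero_mul, sub_zero, neg_zero,
      add_zero]
    positivity
  have hb : 0 < b.re := by
    have h2 : 0 < ‖z2‖ := norm_pos_iff.mpr hz2
    simp only [hb_def, Complex.add_re, Complex.mul_re, Complex.ofReal_re, Complex.ofReal_im,
      Complex.I_re, Complex.I_im, mul_zero, mul_one, zero_sub, zero_mul, sub_zero, neg_zero,
      add_zero]
    positivity
  clear_value a b
  have ha0 : a ≠ 0 := fun h => by simp [h] at ha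
  have hb0 : b ≠ 0 := fun h => by simp [h] at hb
  have hle : π ≤ 3 * π / 2 := by linarith [Real.pi_pos]
  have hIoo : ∫ θ in Set.Ioo π (3 * π / 2),
      ((Real.cos θ : ℂ) * (Real.sin θ : ℂ)) / (a * Real.cos θ + b * Real.sin θ) ^ 4
      = ∫ θ in π..(3 * π / 2),
      ((Real.cos θ : ℂ) * (Real.sin θ : ℂ)) / (a * Real.cos θ + b * Real.sin θ) ^ 4 := by
    rw [intervalIntegral.integral_of_le hle, MeasureTheory.integral_Ioc_eq_integral_Ioo]
  rw [hIoo, key_integral a b ha hb]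
  have hπ : (π : ℂ) ≠ 0 := Complex.ofReal_ne_zero.2 Real.pi_ne_zero
  field_simp
end

section
/- Let b, c ∈ ℂ with Re(b) > 0 and Re(c) > 0. Then ∫_π^{3π/2} (cos θ sin θ)/(b cos θ + c sin θ)⁴ dθ = 1/(6 b² c²). -/
open MeasureTheory Real

/-- Abstract form of the Szegő kernel evaluation for the product of
Heisenberg groups. -/
theorem szego_integral_eval (b c : ℂ) (hb : 0 < b.re) (hc : 0 < c.re) :
    (∫ θ in Set.Ioo π (3 * π / 2),
        ((Real.cos θ : ℂ) * (Real.sin θ : ℂ)) /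
          (b * Real.cos θ + c * Real.sin θ) ^ 4) =
      1 / (6 * b ^ 2 * c ^ 2) := by
  have hb0 : b ≠ 0 := fun h => by simp [h] at hb
  have hc0 : c ≠ 0 := fun h => by simp [h] at hc
  have hpi0 := Real.pi_pos
  have hpi : (π : ℝ) ≤ 3 * π / 2 := by linarith
  -- nonvanishing of the denominator on the closed interval
  have hD : ∀ θ ∈ Set.Icc π (3 * π / 2),
      b * (Real.cos θ : ℂ) + c * (Real.sin θ : ℂ) ≠ 0 := by
    intro θ hθ hzero
    have hcosle : Real.cos θ ≤ 0 :=
      Real.cos_nonpos_of_pi_div_two_le_of_le (by linarith [hθ.1]) (by linarith [hθ.2])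
    have hsinle : Real.sin θ ≤ 0 := by
      have h1 : Real.sin (θ - π) = -Real.sin θ := Real.sin_sub_pi θ
      have h2 : 0 ≤ Real.sin (θ - π) :=
        Real.sin_nonneg_of_nonneg_of_le_pi (by linarith [hθ.1]) (by linarith [hθ.2])
      linarith [h1 ▸ h2]
    have hre : b.re * Real.cos θ + c.re * Real.sin θ = 0 := by
      have := congrArg Complex.re hzero
      simpa [Complex.add_re, Complex.mul_re, Complex.cos_ofReal_re, Complex.sin_ofReal_re] using this
    have hcos0 : Real.cos θ = 0 := by nlinarith
    have hsin0 : Real.sin θ = 0 := by nlinarith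
    nlinarith [Real.sin_sq_add_cos_sq θ]
  set f : ℝ → ℂ := fun θ =>
    ((Real.cos θ : ℂ) * (Real.sin θ : ℂ)) /
      (b * (Real.cos θ : ℂ) + c * (Real.sin θ : ℂ)) ^ 4 with hf
  set F : ℝ → ℂ := fun θ =>
    (Real.sin θ : ℂ) ^ 2 * (3 * b * (Real.cos θ : ℂ) + c * (Real.sin θ : ℂ)) /
      (6 * b ^ 2 * (b * (Real.cos θ : ℂ) + c * (Real.sin θ : ℂ)) ^ 3) with hF
  have hderiv : ∀ θ ∈ Set.uIcc π (3 * π / 2), HasDerivAt F (f θ) θ := by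
    intro θ hθ
    rw [Set.uIcc_of_le hpi] at hθ
    have hDθ := hD θ hθ
    have hs : HasDerivAt (fun t : ℝ => (Real.sin t : ℂ)) (Real.cos θ : ℂ) θ :=
      (Real.hasDerivAt_sin θ).ofReal_comp
    have hk : HasDerivAt (fun t : ℝ => (Real.cos t : ℂ)) (-(Real.sin θ : ℂ)) θ := by
      simpa using (Real.hasDerivAt_cos θ).ofReal_comp
    have hs2 : HasDerivAt (fun t : ℝ => (Real.sin t : ℂ) ^ 2)
        ((Real.cos θ : ℂ) * (Real.sin θ : ℂ) + (Real.sin θ : ℂ) * (Real.cos θ : ℂ)) θ := by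
      have h := hs.mul hs
      simp only [Pi.mul_def] at h
      have heq : (fun t : ℝ => (Real.sin t : ℂ) * (Real.sin t : ℂ))
          = fun t : ℝ => (Real.sin t : ℂ) ^ 2 := by funext t; ring
      rwa [heq] at h
    have hlin : HasDerivAt (fun t : ℝ => 3 * b * (Real.cos t : ℂ) + c * (Real.sin t : ℂ))
        (3 * b * (-(Real.sin θ : ℂ)) + c * (Real.cos θ : ℂ)) θ :=
      (hk.const_mul (3 * b)).add (hs.const_mul c)
    have hN := hs2.mul hlin
    have hD1 : HasDerivAt (fun t : ℝ => b * (Real.cos t : ℂ) + c * (Real.sin t : ℂ))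
        (b * (-(Real.sin θ : ℂ)) + c * (Real.cos θ : ℂ)) θ :=
      (hk.const_mul b).add (hs.const_mul c)
    have hD3 : HasDerivAt (fun t : ℝ => (b * (Real.cos t : ℂ) + c * (Real.sin t : ℂ)) ^ 3)
        ((b * (-(Real.sin θ : ℂ)) + c * (Real.cos θ : ℂ)) *
            ((b * (Real.cos θ : ℂ) + c * (Real.sin θ : ℂ)) *
              (b * (Real.cos θ : ℂ) + c * (Real.sin θ : ℂ))) +
          (b * (Real.cos θ : ℂ) + c * (Real.sin θ : ℂ)) *
            ((b * (-(Real.sin θ : ℂ)) + c * (Real.cos θ : ℂ)) *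
                (b * (Real.cos θ : ℂ) + c * (Real.sin θ : ℂ)) +
              (b * (Real.cos θ : ℂ) + c * (Real.sin θ : ℂ)) *
                (b * (-(Real.sin θ : ℂ)) + c * (Real.cos θ : ℂ)))) θ := by
      have h := hD1.mul (hD1.mul hD1)
      simp only [Pi.mul_def] at h
      have heq : (fun t : ℝ => (b * (Real.cos t : ℂ) + c * (Real.sin t : ℂ)) *
            ((b * (Real.cos t : ℂ) + c * (Real.sin t : ℂ)) *
              (b * (Real.cos t : ℂ) + c * (Real.sin t : ℂ))))
          = fun t : ℝ => (b * (Real.cos t : ℂ) + c * (Real.sin t : ℂ)) ^ 3 := by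
        funext t; ring
      rwa [heq] at h
    have hM := hD3.const_mul (6 * b ^ 2)
    have hMne : (6 : ℂ) * b ^ 2 * (b * (Real.cos θ : ℂ) + c * (Real.sin θ : ℂ)) ^ 3 ≠ 0 := by
      apply mul_ne_zero (mul_ne_zero (by norm_num) (pow_ne_zero _ hb0)) (pow_ne_zero _ hDθ)
    have hdiv := hN.div hM hMne
    convert hdiv using 1
    case e'_4 => rfl
    case e'_8 => rfl
    have hpyth : (Real.sin θ : ℂ) ^ 2 + (Real.cos θ : ℂ) ^ 2 = 1 := by
      have := Real.sin_sq_add_cos_sq θ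
      push_cast
      exact_mod_cast congrArg (fun x : ℝ => (x : ℂ)) this
    rw [hf]
    rw [div_eq_div_iff (pow_ne_zero 4 hDθ) (pow_ne_zero 2 hMne)]
    simp only [Pi.mul_apply]
    linear_combination (-(36 * b ^ 4 *
      (b * (Real.cos θ : ℂ) + c * (Real.sin θ : ℂ)) ^ 6 *
      (Real.sin θ : ℂ) * (Real.cos θ : ℂ))) * hpyth
  have hcont : ContinuousOn f (Set.uIcc π (3 * π / 2)) := by
    rw [Set.uIcc_of_le hpi]
    apply ContinuousOn.div
    · fun_prop
    · fun_prop
    · intro x hx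
      exact pow_ne_zero 4 (hD x hx)
  have hint : IntervalIntegrable f volume π (3 * π / 2) := by
    apply hcont.intervalIntegrable
  have key := intervalIntegral.integral_eq_sub_of_hasDerivAt hderiv hint
  have heq : (∫ θ in Set.Ioo π (3 * π / 2), f θ) = ∫ θ in π..(3 * π / 2), f θ := by
    rw [intervalIntegral.integral_of_le hpi, MeasureTheory.integral_Ioc_eq_integral_Ioo]
  rw [heq, key]
  have h32 : (3 * π / 2 : ℝ) = π + π / 2 := by ring
  rw [hF]
  simp only [h32, Real.sin_pi, Real.cos_pi]
  rw [Real.sin_add, Real.cos_add]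
  simp [Real.sin_pi, Real.cos_pi, Real.sin_pi_div_two, Real.cos_pi_div_two]
  rw [div_eq_iff (by simp [hb0, hc0])]
  field_simp
end

section
/- For integers n, m ≥ 1, real numbers μ₁, …, μ_n > 0, A₀ := ∑_j μ_j |z_j|² with z ∈ ℂⁿ nonzero amounts to A₀ > 0; then the function g(r) := (∏_{j=1}^n μ_j/(1 − r^{μ_j})) · (A(r) − ib)^{−(n+m−1)} − (∏_{j=1}^n μ_j) · (A(0) − ib)^{−(n+m−1)}, where A(r) = ∑_{j=1}^n μ_j (1 + r^{μ_j})/(1 − r^{μ_j}) |z_j|² and b ∈ ℝ, satisfies g(r)/r is integrable on (0,1). -/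
open MeasureTheory Real

private lemma prod_sub_prod_norm_le {ι : Type*} (s : Finset ι) (f g : ι → ℂ)
    (B : ℝ) (hB : 1 ≤ B) (hf : ∀ i ∈ s, ‖f i‖ ≤ B) (hg : ∀ i ∈ s, ‖g i‖ ≤ B) :
    ‖(∏ i ∈ s, f i) - ∏ i ∈ s, g i‖ ≤ B ^ s.card * ∑ i ∈ s, ‖f i - g i‖ := by
  classical
  induction s using Finset.induction_on with
  | empty => simp
  | @insert a s ha ih =>
    have hf' : ∀ i ∈ s, ‖f i‖ ≤ B := fun i hi => hf i (Finset.mem_insert_of_mem hi)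
    have hg' : ∀ i ∈ s, ‖g i‖ ≤ B := fun i hi => hg i (Finset.mem_insert_of_mem hi)
    have hfa : ‖f a‖ ≤ B := hf a (Finset.mem_insert_self a s)
    have hPg : ‖∏ i ∈ s, g i‖ ≤ B ^ s.card := by
      rw [norm_prod]
      calc ∏ i ∈ s, ‖g i‖ ≤ ∏ _i ∈ s, B :=
            Finset.prod_le_prod (fun i _ => norm_nonneg _) hg'
        _ = B ^ s.card := Finset.prod_const B
    rw [Finset.prod_insert ha, Finset.prod_insert ha, Finset.sum_insert ha,
      Finset.card_insert_of_notMem ha]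
    have key : f a * ∏ i ∈ s, f i - g a * ∏ i ∈ s, g i
        = f a * ((∏ i ∈ s, f i) - ∏ i ∈ s, g i) + (f a - g a) * ∏ i ∈ s, g i := by ring
    rw [key]
    have h1 : ‖f a * ((∏ i ∈ s, f i) - ∏ i ∈ s, g i)‖ ≤ B * (B ^ s.card * ∑ i ∈ s, ‖f i - g i‖) := by
      rw [norm_mul]
      exact mul_le_mul hfa (ih hf' hg') (norm_nonneg _) (by linarith)
    have h2 : ‖(f a - g a) * ∏ i ∈ s, g i‖ ≤ ‖f a - g a‖ * B ^ s.card := by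
      rw [norm_mul]
      exact mul_le_mul_of_nonneg_left hPg (norm_nonneg _)
    have hBpow : B ^ s.card ≤ B ^ (s.card + 1) :=
      pow_le_pow_right₀ (by linarith) (Nat.le_succ _)
    have hBpow0 : (0:ℝ) ≤ B ^ s.card := pow_nonneg (by linarith) _
    calc ‖f a * ((∏ i ∈ s, f i) - ∏ i ∈ s, g i) + (f a - g a) * ∏ i ∈ s, g i‖
        ≤ ‖f a * ((∏ i ∈ s, f i) - ∏ i ∈ s, g i)‖ + ‖(f a - g a) * ∏ i ∈ s, g i‖ :=
          norm_add_le _ _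
      _ ≤ B * (B ^ s.card * ∑ i ∈ s, ‖f i - g i‖) + ‖f a - g a‖ * B ^ s.card := by
          exact add_le_add h1 h2
      _ ≤ B ^ (s.card + 1) * (‖f a - g a‖ + ∑ i ∈ s, ‖f i - g i‖) := by
          have h3 : ‖f a - g a‖ * B ^ s.card ≤ ‖f a - g a‖ * B ^ (s.card + 1) :=
            mul_le_mul_of_nonneg_left hBpow (norm_nonneg _)
          have : B * (B ^ s.card * ∑ i ∈ s, ‖f i - g i‖) = B ^ (s.card + 1) * ∑ i ∈ s, ‖f i - g i‖ := by
            ring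
          rw [this]
          linarith [h3]

private lemma one_sub_rpow_le_max (r a : ℝ) (hr0 : 0 ≤ r) (hr1 : r ≤ 1) (ha : 0 < a) :
    1 - r ^ a ≤ max 1 a * (1 - r) := by
  rcases le_total a 1 with h1 | h1
  · rcases eq_or_lt_of_le hr0 with rfl | hr0'
    · simp [Real.zero_rpow ha.ne']

    · have : r ^ (1:ℝ) ≤ r ^ a := Real.rpow_le_rpow_of_exponent_ge hr0' hr1 h1
      rw [Real.rpow_one] at this
      nlinarith [le_max_left (1:ℝ) a]
  · have hB : 1 + a * (r - 1) ≤ (1 + (r - 1)) ^ a :=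
      one_add_mul_self_le_rpow_one_add (by linarith) h1
    have : (1 : ℝ) + (r - 1) = r := by ring
    rw [this] at hB
    have hmax : max 1 a = a := max_eq_right h1
    rw [hmax]; nlinarith

private lemma min_le_one_sub_rpow (r a : ℝ) (hr0 : 0 ≤ r) (hr1 : r ≤ 1) (ha : 0 < a) :
    min 1 a * (1 - r) ≤ 1 - r ^ a := by
  rcases le_total a 1 with h1 | h1
  · have hB : (1 + (r - 1)) ^ a ≤ 1 + a * (r - 1) :=
      rpow_one_add_le_one_add_mul_self (by linarith) ha.le h1
    have : (1 : ℝ) + (r - 1) = r := by ring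
    rw [this] at hB
    have hmin : min 1 a = a := min_eq_right h1
    rw [hmin]; nlinarith
  · rcases eq_or_lt_of_le hr0 with rfl | hr0'
    · simp [Real.zero_rpow ha.ne']

    · have : r ^ a ≤ r ^ (1:ℝ) := Real.rpow_le_rpow_of_exponent_ge hr0' hr1 h1
      rw [Real.rpow_one] at this
      nlinarith [min_le_left (1:ℝ) a]

private lemma re_le_norm_sub_I_mul (x t : ℝ) (hx : 0 ≤ x) :
    x ≤ ‖(x : ℂ) - Complex.I * t‖ := by
  have hre : ((x : ℂ) - Complex.I * t).re = x := by simp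
  calc x = |((x : ℂ) - Complex.I * t).re| := by rw [hre, abs_of_nonneg hx]
    _ ≤ ‖(x : ℂ) - Complex.I * t‖ := Complex.abs_re_le_norm _

private lemma cast_div_eq (a u : ℝ) :
    (a : ℂ) / (1 - (u : ℂ)) = ((a / (1 - u) : ℝ) : ℂ) := by
  push_cast
  ring

private lemma cast_div_sub (a u : ℝ) (h : 1 - u ≠ 0) :
    (a : ℂ) / (1 - (u : ℂ)) - (a : ℂ) = ((a * (u / (1 - u)) : ℝ) : ℂ) := by
  have h' : (1 : ℂ) - (u : ℂ) ≠ 0 := by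
    intro hh
    apply h
    have := congrArg Complex.re hh
    simpa using this
  push_cast
  field_simp
  ring

set_option maxHeartbeats 2000000 in
/-- Absolute convergence of the subtracted integrand in the canonical
relative fundamental solution formula. -/
theorem subtracted_integrand_integrable (n m : ℕ) (hn : 1 ≤ n) (hm : 1 ≤ m)
    (μ : Fin n → ℝ) (hμ : ∀ j, 0 < μ j) (z : Fin n → ℂ) (hz : z ≠ 0) (b : ℝ) :
    let A : ℝ → ℝ := fun r =>
      ∑ j, μ j * ((1 + r ^ μ j) / (1 - r ^ μ j)) * ‖z j‖ ^ 2
    let g : ℝ → ℂ := fun r =>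
      (∏ j, (μ j : ℂ) / (1 - ((r ^ μ j : ℝ) : ℂ))) *
          (((A r : ℝ) : ℂ) - Complex.I * b)⁻¹ ^ (n + m - 1) -
        (∏ j, (μ j : ℂ)) * (((A 0 : ℝ) : ℂ) - Complex.I * b)⁻¹ ^ (n + m - 1)
    IntegrableOn (fun r : ℝ => g r / (r : ℂ)) (Set.Ioo 0 1) := by
  intro A g
  classical
  have hA : ∀ r : ℝ, A r = ∑ j, μ j * ((1 + r ^ μ j) / (1 - r ^ μ j)) * ‖z j‖ ^ 2 :=
    fun _ => rfl
  have hg : ∀ r : ℝ, g r = (∏ j, (μ j : ℂ) / (1 - ((r ^ μ j : ℝ) : ℂ))) *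
      (((A r : ℝ) : ℂ) - Complex.I * b)⁻¹ ^ (n + m - 1) -
      (∏ j, (μ j : ℂ)) * (((A 0 : ℝ) : ℂ) - Complex.I * b)⁻¹ ^ (n + m - 1) := fun _ => rfl
  obtain ⟨N, hN⟩ : ∃ N, N = n + m - 1 := ⟨_, rfl⟩
  rw [← hN] at hg
  have hNsplit : N = n + (m - 1) := by omega
  obtain ⟨j0, hj0⟩ : ∃ j, z j ≠ 0 := Function.ne_iff.mp hz
  obtain ⟨j1, -, hj1⟩ := Finset.exists_min_image Finset.univ μ ⟨⟨0, hn⟩, Finset.mem_univ _⟩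
  obtain ⟨c, hc_def⟩ : ∃ x : ℝ, x = μ j1 := ⟨_, rfl⟩
  have hc0 : 0 < c := by rw [hc_def]; exact hμ j1
  have hcle : ∀ j, c ≤ μ j := by intro j; rw [hc_def]; exact hj1 j (Finset.mem_univ j)
  obtain ⟨δ, hδ_def⟩ : ∃ x : ℝ, x = 1 - (2⁻¹ : ℝ) ^ c := ⟨_, rfl⟩
  have hδ0 : 0 < δ := by
    have : (2⁻¹ : ℝ) ^ c < 1 := Real.rpow_lt_one (by norm_num) (by norm_num) hc0
    rw [hδ_def]; linarith
  have hδ1 : δ ≤ 1 := by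
    have : 0 < (2⁻¹ : ℝ) ^ c := Real.rpow_pos_of_pos (by norm_num) _
    rw [hδ_def]; linarith
  obtain ⟨S1, hS1_def⟩ : ∃ x : ℝ, x = ∑ j, μ j := ⟨_, rfl⟩
  have hS1 : 0 ≤ S1 := by
    rw [hS1_def]; exact Finset.sum_nonneg fun j _ => (hμ j).le
  have hμS1 : ∀ j, μ j ≤ S1 := by
    intro j; rw [hS1_def]
    exact Finset.single_le_sum (fun i _ => (hμ i).le) (Finset.mem_univ j)
  obtain ⟨S2, hS2_def⟩ : ∃ x : ℝ, x = ∑ j, μ j * ‖z j‖ ^ 2 := ⟨_, rfl⟩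
  have hS2 : 0 < S2 := by
    rw [hS2_def]
    refine Finset.sum_pos'
      (fun j _ => mul_nonneg (hμ j).le (pow_nonneg (norm_nonneg _) 2))
      ⟨j0, Finset.mem_univ _, ?_⟩
    exact mul_pos (hμ j0) (pow_pos ((norm_pos_iff.mpr hj0)) 2)
  have hA0 : A 0 = S2 := by
    rw [hA, hS2_def]
    refine Finset.sum_congr rfl fun j _ => ?_
    rw [Real.zero_rpow (hμ j).ne']
    norm_num
  -- pointwise facts on (0,1)
  have hu : ∀ r ∈ Set.Ioo (0:ℝ) 1, ∀ j : Fin n, 0 < r ^ μ j :=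
    fun r hr _ => Real.rpow_pos_of_pos hr.1 _
  have hu1 : ∀ r ∈ Set.Ioo (0:ℝ) 1, ∀ j : Fin n, r ^ μ j < 1 :=
    fun r hr j => Real.rpow_lt_one hr.1.le hr.2 (hμ j)
  have hterm_nonneg : ∀ r ∈ Set.Ioo (0:ℝ) 1, ∀ j : Fin n,
      0 ≤ μ j * ((1 + r ^ μ j) / (1 - r ^ μ j)) * ‖z j‖ ^ 2 := by
    intro r hr j
    have h1 := hu r hr j; have h2 := hu1 r hr j
    have hq : 0 ≤ (1 + r ^ μ j) / (1 - r ^ μ j) :=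
      div_nonneg (by linarith) (by linarith)
    exact mul_nonneg (mul_nonneg (hμ j).le hq) (pow_nonneg (norm_nonneg _) 2)
  have hAge : ∀ r ∈ Set.Ioo (0:ℝ) 1, S2 ≤ A r := by
    intro r hr
    rw [hA, hS2_def]
    refine Finset.sum_le_sum fun j _ => ?_
    have h1 := hu r hr j; have h2 := hu1 r hr j
    have hq : 1 ≤ (1 + r ^ μ j) / (1 - r ^ μ j) := by
      rw [le_div_iff₀ (by linarith)]; linarith
    have hZ : 0 ≤ ‖z j‖ ^ 2 := pow_nonneg (norm_nonneg _) 2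
    nlinarith [hμ j, mul_nonneg (mul_nonneg (hμ j).le (sub_nonneg.mpr hq)) hZ]
  have hApos : ∀ r ∈ Set.Ioo (0:ℝ) 1, 0 < A r := fun r hr => lt_of_lt_of_le hS2 (hAge r hr)
  -- norm bounds for the inverse factor
  have hwnorm : ∀ x : ℝ, 0 < x → x ≤ ‖(x : ℂ) - Complex.I * b‖ :=
    fun x hx => re_le_norm_sub_I_mul x b hx.le
  have hwne : ∀ x : ℝ, 0 < x → (x : ℂ) - Complex.I * b ≠ 0 := by
    intro x hx h
    have := hwnorm x hx
    rw [h, norm_zero] at this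
    linarith
  have hQle : ∀ x : ℝ, 0 < x → ‖((x : ℂ) - Complex.I * b)⁻¹‖ ≤ x⁻¹ := by
    intro x hx
    rw [norm_inv]
    exact inv_anti₀ hx (hwnorm x hx)
  have hQ0' : ‖(((A 0 : ℝ) : ℂ) - Complex.I * b)⁻¹‖ ≤ S2⁻¹ := by
    rw [hA0]
    exact hQle S2 hS2
  have hS2inv : 0 ≤ S2⁻¹ := inv_nonneg.mpr hS2.le
  -- measurability
  have hrpowm : ∀ a : ℝ, 0 < a → Measurable fun r : ℝ => r ^ a := fun a ha =>
    (Real.continuous_rpow_const ha.le).measurable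
  have hAm : Measurable A := by
    have hAe : A = fun r => ∑ j, μ j * ((1 + r ^ μ j) / (1 - r ^ μ j)) * ‖z j‖ ^ 2 :=
      funext hA
    rw [hAe]
    refine Finset.measurable_sum _ fun j _ => ?_
    exact (((measurable_const.add (hrpowm _ (hμ j))).div
      (measurable_const.sub (hrpowm _ (hμ j)))).const_mul (μ j)).mul_const _
  have hmeas : Measurable fun r : ℝ => g r / (r : ℂ) := by
    have hge : g = fun r => (∏ j, (μ j : ℂ) / (1 - ((r ^ μ j : ℝ) : ℂ))) *
        (((A r : ℝ) : ℂ) - Complex.I * b)⁻¹ ^ N -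
        (∏ j, (μ j : ℂ)) * (((A 0 : ℝ) : ℂ) - Complex.I * b)⁻¹ ^ N := funext hg
    have hgm : Measurable g := by
      rw [hge]
      refine Measurable.sub (Measurable.mul ?_ ?_) measurable_const
      · exact Finset.measurable_prod _ fun j _ => measurable_const.div
          (measurable_const.sub (Complex.measurable_ofReal.comp (hrpowm _ (hμ j))))
      · exact (((Complex.measurable_ofReal.comp hAm).sub measurable_const).inv).pow_const _
    exact hgm.div Complex.measurable_ofReal
  -- constants
  obtain ⟨Pμ, hPμ_def⟩ : ∃ x : ℝ, x = ∏ j, μ j := ⟨_, rfl⟩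
  have hPμpos : 0 < Pμ := by
    rw [hPμ_def]; exact Finset.prod_pos fun j _ => hμ j
  have hPμnorm : ‖∏ j, (μ j : ℂ)‖ = Pμ := by
    rw [norm_prod, hPμ_def]
    exact Finset.prod_congr rfl fun j _ => by
      rw [Complex.norm_real, Real.norm_eq_abs, abs_of_pos (hμ j)]
  obtain ⟨B, hB_def⟩ : ∃ x : ℝ, x = (1 + S1) / δ := ⟨_, rfl⟩
  have hB1 : 1 ≤ B := by rw [hB_def, le_div_iff₀ hδ0]; linarith
  obtain ⟨B', hB'_def⟩ : ∃ x : ℝ, x = 1 + S2⁻¹ := ⟨_, rfl⟩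
  have hB'1 : 1 ≤ B' := by rw [hB'_def]; linarith
  obtain ⟨C3, hC3_def⟩ : ∃ x : ℝ, x = B ^ n * (S1 / δ) * S2⁻¹ ^ N +
    Pμ * (B' ^ N * ((N : ℝ) * (S2 * (2 / δ) * (S2⁻¹ * S2⁻¹)))) := ⟨_, rfl⟩
  -- the near-zero bound
  have hbound1 : ∀ r ∈ Set.Ioc (0:ℝ) (1/2), ‖g r / (r:ℂ)‖ ≤ C3 * r ^ (c - 1) := by
    intro r hr
    have hr01 : r ∈ Set.Ioo (0:ℝ) 1 := ⟨hr.1, lt_of_le_of_lt hr.2 (by norm_num)⟩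
    have hrc : ∀ j : Fin n, r ^ μ j ≤ r ^ c := fun j =>
      Real.rpow_le_rpow_of_exponent_ge hr.1 (by linarith [hr01.2]) (hcle j)
    have hden : ∀ j : Fin n, δ ≤ 1 - r ^ μ j := by
      intro j
      have h1 : r ^ μ j ≤ (2⁻¹ : ℝ) ^ μ j :=
        Real.rpow_le_rpow hr.1.le (by rw [show (2⁻¹:ℝ) = 1/2 by norm_num]; exact hr.2) (hμ j).le
      have h2 : (2⁻¹ : ℝ) ^ μ j ≤ (2⁻¹ : ℝ) ^ c :=
        Real.rpow_le_rpow_of_exponent_ge (by norm_num) (by norm_num) (hcle j)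
      rw [hδ_def]; linarith
    have hrc0 : 0 < r ^ c := Real.rpow_pos_of_pos hr.1 _
    have hfnorm : ∀ j : Fin n, ‖(μ j : ℂ) / (1 - ((r ^ μ j : ℝ) : ℂ))‖ ≤ B := by
      intro j
      rw [cast_div_eq, Complex.norm_real, Real.norm_eq_abs,
        abs_of_nonneg (div_nonneg (hμ j).le (by linarith [hden j]))]
      rw [hB_def]
      exact div_le_div₀ (by linarith) (by linarith [hμS1 j]) hδ0 (hden j)
    have hgnorm_j : ∀ j : Fin n, ‖(μ j : ℂ)‖ ≤ B := by
      intro j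
      rw [Complex.norm_real, Real.norm_eq_abs, abs_of_pos (hμ j), hB_def, le_div_iff₀ hδ0]
      nlinarith [hμS1 j, hμ j]
    have hPdiff : ‖(∏ j, (μ j : ℂ) / (1 - ((r ^ μ j : ℝ) : ℂ))) - ∏ j, (μ j : ℂ)‖
        ≤ B ^ n * (S1 / δ) * r ^ c := by
      have hmain := prod_sub_prod_norm_le Finset.univ
        (fun j => (μ j : ℂ) / (1 - ((r ^ μ j : ℝ) : ℂ))) (fun j => (μ j : ℂ)) B hB1
        (fun j _ => hfnorm j) (fun j _ => hgnorm_j j)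
      rw [Finset.card_univ, Fintype.card_fin] at hmain
      refine hmain.trans ?_
      have hsum : ∑ j, ‖(μ j : ℂ) / (1 - ((r ^ μ j : ℝ) : ℂ)) - (μ j : ℂ)‖
          ≤ ∑ j, μ j * (r ^ c / δ) := by
        refine Finset.sum_le_sum fun j _ => ?_
        rw [cast_div_sub (μ j) (r ^ μ j) (by linarith [hden j]), Complex.norm_real,
          Real.norm_eq_abs, abs_of_nonneg (mul_nonneg (hμ j).le
            (div_nonneg (hu r hr01 j).le (by linarith [hden j])))]
        refine mul_le_mul_of_nonneg_left ?_ (hμ j).le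
        exact div_le_div₀ hrc0.le (hrc j) hδ0 (hden j)
      calc B ^ n * ∑ j, ‖(μ j : ℂ) / (1 - ((r ^ μ j : ℝ) : ℂ)) - (μ j : ℂ)‖
          ≤ B ^ n * ∑ j, μ j * (r ^ c / δ) :=
            mul_le_mul_of_nonneg_left hsum (pow_nonneg (by linarith) n)
        _ = B ^ n * (S1 / δ) * r ^ c := by
            rw [← Finset.sum_mul, ← hS1_def]; ring
    have hApos' := hApos r hr01
    have hQr : ‖(((A r : ℝ) : ℂ) - Complex.I * b)⁻¹‖ ≤ S2⁻¹ :=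
      (hQle (A r) hApos').trans (inv_anti₀ hS2 (hAge r hr01))
    have hAup : A r - A 0 ≤ S2 * (2 / δ) * r ^ c := by
      rw [hA0, hA]
      have hle : ∑ j, μ j * ((1 + r ^ μ j) / (1 - r ^ μ j)) * ‖z j‖ ^ 2
          ≤ ∑ j, (μ j * ‖z j‖ ^ 2 +
            μ j * ‖z j‖ ^ 2 * (2 / δ * r ^ c)) := by
        refine Finset.sum_le_sum fun j _ => ?_
        have h1 := hu r hr01 j; have h2 := hu1 r hr01 j
        have hqq : (1 + r ^ μ j) / (1 - r ^ μ j) ≤ 1 + 2 / δ * r ^ c := by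
          rw [div_le_iff₀ (by linarith)]
          have hkey : 2 * r ^ μ j ≤ 2 / δ * r ^ c * (1 - r ^ μ j) := by
            have e1 : 2 / δ * r ^ c * δ = 2 * r ^ c := by
              field_simp
            have e2 : 2 / δ * r ^ c * δ ≤ 2 / δ * r ^ c * (1 - r ^ μ j) :=
              mul_le_mul_of_nonneg_left (hden j)
                (mul_nonneg (div_nonneg (by norm_num) hδ0.le) hrc0.le)
            have e3 : 2 * r ^ μ j ≤ 2 * r ^ c := by linarith [hrc j]
            linarith
          nlinarith
        have hZ : 0 ≤ ‖z j‖ ^ 2 := pow_nonneg (norm_nonneg _) 2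
        have hμZ : 0 ≤ μ j * ‖z j‖ ^ 2 := mul_nonneg (hμ j).le hZ
        nlinarith [mul_le_mul_of_nonneg_left hqq hμZ]
      rw [Finset.sum_add_distrib, ← Finset.sum_mul, ← hS2_def] at hle
      have : S2 * (2 / δ * r ^ c) = S2 * (2 / δ) * r ^ c := by ring
      linarith
    have hinvdiff : ‖(((A r : ℝ) : ℂ) - Complex.I * b)⁻¹ - (((A 0 : ℝ) : ℂ) - Complex.I * b)⁻¹‖
        ≤ S2 * (2 / δ) * r ^ c * (S2⁻¹ * S2⁻¹) := by
      have hw := hwne (A r) hApos'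
      have hw0 := hwne (A 0) (by rw [hA0]; exact hS2)
      have hid : (((A r : ℝ) : ℂ) - Complex.I * b)⁻¹ - (((A 0 : ℝ) : ℂ) - Complex.I * b)⁻¹
          = ((A 0 - A r : ℝ) : ℂ) *
            ((((A r : ℝ) : ℂ) - Complex.I * b)⁻¹ * ((((A 0 : ℝ) : ℂ) - Complex.I * b)⁻¹)) := by
        push_cast
        field_simp
        ring
      rw [hid, norm_mul, norm_mul, Complex.norm_real, Real.norm_eq_abs]
      have h1 : |A 0 - A r| ≤ S2 * (2 / δ) * r ^ c := by
        have hge := hAge r hr01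
        rw [abs_sub_comm, abs_of_nonneg (by linarith [hA0] : (0:ℝ) ≤ A r - A 0)]
        linarith [hAup]
      refine mul_le_mul h1 (mul_le_mul hQr hQ0' (norm_nonneg _) hS2inv) ?_ ?_
      · exact mul_nonneg (norm_nonneg _) (norm_nonneg _)
      · exact mul_nonneg (mul_nonneg hS2.le (div_nonneg (by norm_num) hδ0.le)) hrc0.le
    have hQdiff : ‖(((A r : ℝ) : ℂ) - Complex.I * b)⁻¹ ^ N -
        (((A 0 : ℝ) : ℂ) - Complex.I * b)⁻¹ ^ N‖
        ≤ B' ^ N * ((N : ℝ) * (S2 * (2 / δ) * r ^ c * (S2⁻¹ * S2⁻¹))) := by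
      have hmain := prod_sub_prod_norm_le (Finset.range N)
        (fun _ => (((A r : ℝ) : ℂ) - Complex.I * b)⁻¹)
        (fun _ => (((A 0 : ℝ) : ℂ) - Complex.I * b)⁻¹) B' hB'1
        (fun i _ => hQr.trans (by rw [hB'_def]; linarith))
        (fun i _ => hQ0'.trans (by rw [hB'_def]; linarith))
      simp only [Finset.prod_const, Finset.card_range, Finset.sum_const, nsmul_eq_mul] at hmain
      refine hmain.trans ?_
      exact mul_le_mul_of_nonneg_left
        (mul_le_mul_of_nonneg_left hinvdiff (Nat.cast_nonneg N))
        (pow_nonneg (by linarith) N)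
    have hgid : g r = ((∏ j, (μ j : ℂ) / (1 - ((r ^ μ j : ℝ) : ℂ))) - ∏ j, (μ j : ℂ)) *
        ((((A r : ℝ) : ℂ) - Complex.I * b)⁻¹ ^ N) +
        (∏ j, (μ j : ℂ)) * ((((A r : ℝ) : ℂ) - Complex.I * b)⁻¹ ^ N -
          (((A 0 : ℝ) : ℂ) - Complex.I * b)⁻¹ ^ N) := by
      rw [hg]; ring
    have hQpow : ‖(((A r : ℝ) : ℂ) - Complex.I * b)⁻¹ ^ N‖ ≤ S2⁻¹ ^ N := by
      rw [norm_pow]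
      exact pow_le_pow_left₀ (norm_nonneg _) hQr N
    have hgle : ‖g r‖ ≤ C3 * r ^ c := by
      rw [hgid]
      refine (norm_add_le _ _).trans ?_
      rw [norm_mul, norm_mul, hPμnorm]
      have h1 : ‖(∏ j, (μ j : ℂ) / (1 - ((r ^ μ j : ℝ) : ℂ))) - ∏ j, (μ j : ℂ)‖ *
          ‖(((A r : ℝ) : ℂ) - Complex.I * b)⁻¹ ^ N‖
          ≤ B ^ n * (S1 / δ) * r ^ c * S2⁻¹ ^ N :=
        mul_le_mul hPdiff hQpow (norm_nonneg _)
          (mul_nonneg (mul_nonneg (pow_nonneg (by linarith) n) (div_nonneg hS1 hδ0.le)) hrc0.le)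
      have h2 : Pμ * ‖(((A r : ℝ) : ℂ) - Complex.I * b)⁻¹ ^ N -
          (((A 0 : ℝ) : ℂ) - Complex.I * b)⁻¹ ^ N‖
          ≤ Pμ * (B' ^ N * ((N : ℝ) * (S2 * (2 / δ) * r ^ c * (S2⁻¹ * S2⁻¹)))) :=
        mul_le_mul_of_nonneg_left hQdiff hPμpos.le
      calc ‖(∏ j, (μ j : ℂ) / (1 - ((r ^ μ j : ℝ) : ℂ))) - ∏ j, (μ j : ℂ)‖ *
          ‖(((A r : ℝ) : ℂ) - Complex.I * b)⁻¹ ^ N‖ +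
          Pμ * ‖(((A r : ℝ) : ℂ) - Complex.I * b)⁻¹ ^ N -
            (((A 0 : ℝ) : ℂ) - Complex.I * b)⁻¹ ^ N‖
          ≤ B ^ n * (S1 / δ) * r ^ c * S2⁻¹ ^ N +
            Pμ * (B' ^ N * ((N : ℝ) * (S2 * (2 / δ) * r ^ c * (S2⁻¹ * S2⁻¹)))) :=
            add_le_add h1 h2
        _ = C3 * r ^ c := by rw [hC3_def]; ring
    have hnormdiv : ‖g r / (r : ℂ)‖ = ‖g r‖ / r := by
      rw [norm_div, Complex.norm_real, Real.norm_eq_abs, abs_of_pos hr.1]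
    rw [hnormdiv, div_le_iff₀ hr.1]
    have hrc' : C3 * r ^ (c - 1) * r = C3 * r ^ c := by
      rw [mul_assoc]
      congr 1
      nth_rewrite 2 [show r = r ^ (1:ℝ) by rw [Real.rpow_one]]
      rw [← Real.rpow_add hr.1]
      norm_num
    rw [hrc']
    exact hgle
  -- the near-one bound
  obtain ⟨K0, hK0_def⟩ : ∃ x : ℝ, x = μ j0 * ‖z j0‖ ^ 2 / max 1 (μ j0) := ⟨_, rfl⟩
  have hK0 : 0 < K0 := by
    rw [hK0_def]
    exact div_pos (mul_pos (hμ j0) (pow_pos ((norm_pos_iff.mpr hj0)) 2))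
      (lt_of_lt_of_le one_pos (le_max_left _ _))
  obtain ⟨Cb, hCb_def⟩ : ∃ x : ℝ,
      x = 2 * ((∏ j, μ j / min 1 (μ j)) * K0⁻¹ ^ N + Pμ * S2⁻¹ ^ N) := ⟨_, rfl⟩
  have hprodmin : (0:ℝ) ≤ ∏ j, μ j / min 1 (μ j) :=
    Finset.prod_nonneg fun j _ => div_nonneg (hμ j).le (le_min zero_le_one (hμ j).le)
  have hbound2 : ∀ r ∈ Set.Ioo (1/2:ℝ) 1, ‖g r / (r:ℂ)‖ ≤ Cb := by
    intro r hr
    have hr01 : r ∈ Set.Ioo (0:ℝ) 1 := ⟨lt_trans (by norm_num) hr.1, hr.2⟩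
    have ht0 : 0 < 1 - r := by linarith [hr.2]
    have hAK : K0 / (1 - r) ≤ A r := by
      rw [hA]
      have h1 := hu r hr01 j0; have h2 := hu1 r hr01 j0
      have hub : 1 - r ^ μ j0 ≤ max 1 (μ j0) * (1 - r) :=
        one_sub_rpow_le_max r (μ j0) hr01.1.le hr01.2.le (hμ j0)
      have hmax0 : (0:ℝ) < max 1 (μ j0) := lt_of_lt_of_le one_pos (le_max_left _ _)
      have hZ : 0 < ‖z j0‖ ^ 2 := pow_pos ((norm_pos_iff.mpr hj0)) 2
      have hterm : K0 / (1 - r) ≤ μ j0 * ((1 + r ^ μ j0) / (1 - r ^ μ j0)) *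
          ‖z j0‖ ^ 2 := by
        rw [hK0_def, div_div, div_le_iff₀ (mul_pos hmax0 ht0)]
        have hexp : μ j0 * ((1 + r ^ μ j0) / (1 - r ^ μ j0)) * ‖z j0‖ ^ 2 *
            (max 1 (μ j0) * (1 - r))
            = μ j0 * ‖z j0‖ ^ 2 * (1 + r ^ μ j0) *
              (max 1 (μ j0) * (1 - r) / (1 - r ^ μ j0)) := by
          field_simp
        rw [hexp]
        have hq : 1 ≤ max 1 (μ j0) * (1 - r) / (1 - r ^ μ j0) := by
          rw [le_div_iff₀ (by linarith)]
          linarith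
        have hone : 1 ≤ (1 + r ^ μ j0) * (max 1 (μ j0) * (1 - r) / (1 - r ^ μ j0)) := by
          nlinarith [mul_nonneg h1.le (le_trans zero_le_one hq)]
        nlinarith [mul_le_mul_of_nonneg_left hone (mul_nonneg (hμ j0).le hZ.le)]
      calc K0 / (1 - r) ≤ μ j0 * ((1 + r ^ μ j0) / (1 - r ^ μ j0)) * ‖z j0‖ ^ 2 :=
            hterm
        _ ≤ ∑ j, μ j * ((1 + r ^ μ j) / (1 - r ^ μ j)) * ‖z j‖ ^ 2 :=
            Finset.single_le_sum (fun j _ => hterm_nonneg r hr01 j) (Finset.mem_univ j0)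
    have hApos' := hApos r hr01
    have hQr : ‖(((A r : ℝ) : ℂ) - Complex.I * b)⁻¹‖ ≤ (1 - r) * K0⁻¹ := by
      refine (hQle (A r) hApos').trans ?_
      calc (A r)⁻¹ ≤ (K0 / (1 - r))⁻¹ := inv_anti₀ (div_pos hK0 ht0) hAK
        _ = (1 - r) * K0⁻¹ := by rw [inv_div, div_eq_mul_inv]
    have hfnorm2 : ∀ j : Fin n, ‖(μ j : ℂ) / (1 - ((r ^ μ j : ℝ) : ℂ))‖
        ≤ μ j / min 1 (μ j) * (1 - r)⁻¹ := by
      intro j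
      have h2 := hu1 r hr01 j
      rw [cast_div_eq, Complex.norm_real, Real.norm_eq_abs,
        abs_of_nonneg (div_nonneg (hμ j).le (by linarith))]
      have hlb : min 1 (μ j) * (1 - r) ≤ 1 - r ^ μ j :=
        min_le_one_sub_rpow r (μ j) hr01.1.le hr01.2.le (hμ j)
      have hmin0 : 0 < min 1 (μ j) := lt_min one_pos (hμ j)
      calc μ j / (1 - r ^ μ j) ≤ μ j / (min 1 (μ j) * (1 - r)) :=
            div_le_div_of_nonneg_left (hμ j).le (mul_pos hmin0 ht0) hlb
        _ = μ j / min 1 (μ j) * (1 - r)⁻¹ := by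
            rw [div_eq_mul_inv, mul_inv, div_eq_mul_inv, mul_assoc]
    have hPr : ‖∏ j, (μ j : ℂ) / (1 - ((r ^ μ j : ℝ) : ℂ))‖
        ≤ (∏ j, μ j / min 1 (μ j)) * ((1 - r)⁻¹) ^ n := by
      rw [norm_prod]
      calc ∏ j, ‖(μ j : ℂ) / (1 - ((r ^ μ j : ℝ) : ℂ))‖
          ≤ ∏ j, μ j / min 1 (μ j) * (1 - r)⁻¹ :=
            Finset.prod_le_prod (fun j _ => norm_nonneg _) (fun j _ => hfnorm2 j)
        _ = (∏ j, μ j / min 1 (μ j)) * ((1 - r)⁻¹) ^ n := by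
            rw [Finset.prod_mul_distrib, Finset.prod_const, Finset.card_univ, Fintype.card_fin]
    have hQpow : ‖(((A r : ℝ) : ℂ) - Complex.I * b)⁻¹ ^ N‖ ≤ ((1 - r) * K0⁻¹) ^ N := by
      rw [norm_pow]
      exact pow_le_pow_left₀ (norm_nonneg _) hQr N
    have hfirst : ‖(∏ j, (μ j : ℂ) / (1 - ((r ^ μ j : ℝ) : ℂ))) *
        ((((A r : ℝ) : ℂ) - Complex.I * b)⁻¹ ^ N)‖
        ≤ (∏ j, μ j / min 1 (μ j)) * K0⁻¹ ^ N := by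
      rw [norm_mul]
      have step : ‖∏ j, (μ j : ℂ) / (1 - ((r ^ μ j : ℝ) : ℂ))‖ *
          ‖(((A r : ℝ) : ℂ) - Complex.I * b)⁻¹ ^ N‖
          ≤ ((∏ j, μ j / min 1 (μ j)) * ((1 - r)⁻¹) ^ n) * (((1 - r) * K0⁻¹) ^ N) :=
        mul_le_mul hPr hQpow (norm_nonneg _)
          (mul_nonneg hprodmin (pow_nonneg (inv_nonneg.mpr ht0.le) n))
      refine step.trans ?_
      have hpow : ((1 - r)⁻¹) ^ n * (1 - r) ^ N = (1 - r) ^ (m - 1) := by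
        rw [hNsplit, pow_add, inv_pow, ← mul_assoc,
          inv_mul_cancel₀ (pow_ne_zero _ (ne_of_gt ht0)), one_mul]
      have heq : ((∏ j, μ j / min 1 (μ j)) * ((1 - r)⁻¹) ^ n) * (((1 - r) * K0⁻¹) ^ N)
          = ((∏ j, μ j / min 1 (μ j)) * K0⁻¹ ^ N) * (((1 - r)⁻¹) ^ n * (1 - r) ^ N) := by
        rw [mul_pow]
        ring
      rw [heq, hpow]
      have hle1 : (1 - r) ^ (m - 1) ≤ 1 := pow_le_one₀ ht0.le (by linarith [hr01.1])
      have hnn : (0:ℝ) ≤ (∏ j, μ j / min 1 (μ j)) * K0⁻¹ ^ N :=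
        mul_nonneg hprodmin (pow_nonneg (inv_nonneg.mpr hK0.le) N)
      exact mul_le_of_le_one_right hnn hle1
    have hsecond : ‖(∏ j, (μ j : ℂ)) * ((((A 0 : ℝ) : ℂ) - Complex.I * b)⁻¹ ^ N)‖
        ≤ Pμ * S2⁻¹ ^ N := by
      rw [norm_mul, hPμnorm, norm_pow]
      exact mul_le_mul_of_nonneg_left (pow_le_pow_left₀ (norm_nonneg _) hQ0' N) hPμpos.le
    have hgle : ‖g r‖ ≤ Cb / 2 := by
      rw [hg]
      refine (norm_sub_le _ _).trans ?_
      rw [hCb_def]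
      have := add_le_add hfirst hsecond
      linarith
    rw [norm_div, Complex.norm_real, Real.norm_eq_abs, abs_of_pos hr01.1]
    have hCb2 : 0 ≤ Cb / 2 := le_trans (norm_nonneg _) hgle
    calc ‖g r‖ / r ≤ (Cb / 2) / (1 / 2) := div_le_div₀ hCb2 hgle (by norm_num) hr.1.le
      _ = Cb := by ring
  -- assemble
  have h1 : IntegrableOn (fun r : ℝ => g r / (r : ℂ)) (Set.Ioc 0 (1/2)) := by
    have hint1 : IntegrableOn (fun r : ℝ => C3 * r ^ (c - 1)) (Set.Ioc (0:ℝ) (1/2)) := by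
      have h := intervalIntegral.intervalIntegrable_rpow' (a := 0) (b := 1/2)
        (show (-1:ℝ) < c - 1 by linarith)
      rw [intervalIntegrable_iff_integrableOn_Ioc_of_le (by norm_num)] at h
      exact h.const_mul C3
    refine Integrable.mono' hint1 (hmeas.aestronglyMeasurable.restrict) ?_
    rw [ae_restrict_iff' measurableSet_Ioc]
    exact Filter.Eventually.of_forall hbound1
  have h2 : IntegrableOn (fun r : ℝ => g r / (r : ℂ)) (Set.Ioo (1/2) 1) := by
    have hint2 : IntegrableOn (fun _ : ℝ => Cb) (Set.Ioo (1/2:ℝ) 1) :=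
      (integrableOn_const_iff).mpr (Or.inr measure_Ioo_lt_top)
    refine Integrable.mono' hint2 (hmeas.aestronglyMeasurable.restrict) ?_
    rw [ae_restrict_iff' measurableSet_Ioo]
    exact Filter.Eventually.of_forall hbound2
  have hu12 := h1.union h2
  rwa [Set.Ioc_union_Ioo_eq_Ioo (by norm_num) (by norm_num)] at hu12
end
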